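/- arXiv:1111.1150 — 6 statements merged into one kernel-verified Lean document; each statement's English description precedes it below -/
import Mathlib

section
/- If a, b, c are integers with gcd(a,b,c)=1, ab ≠ 0, and ka + lb = gcd(a,b) for integers k, l, then the vectors u = (1/gcd(a,b))·(-b,a,0) and τ = k·(-c,0,a) + l·(0,-c,b) generate the lattice {(x,y,z) ∈ ℤ³ : ax+by+cz = 0}. -/
theorem explicit_generators_of_sublattice (a b c k l : ℤ)
    (hgcd : Int.gcd a (Int.gcd b c) = 1) (hab : a * b ≠ 0)
    (hkl : k * a + l * b = Int.gcd a b)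
    (u τ : Fin 3 → ℤ)
    (hu : u = ![(-b) / (Int.gcd a b : ℤ), a / (Int.gcd a b : ℤ), 0])
    (hτ : τ = fun i => k * (![-c, 0, a] i) + l * (![0, -c, b] i)) :
    ∀ p : Fin 3 → ℤ, a * p 0 + b * p 1 + c * p 2 = 0 ↔
      ∃ m n : ℤ, p = m • u + n • τ := by
  intro p
  set g : ℤ := (Int.gcd a b : ℤ) with hg
  have ha0 : a ≠ 0 := fun h => hab (by rw [h]; ring)
  have hg0 : g ≠ 0 := by
    simp only [hg, Ne, Int.natCast_eq_zero, Int.gcd_eq_zero_iff, not_and]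
    intro h; exact absurd h ha0
  obtain ⟨a', ha⟩ : g ∣ a := Int.gcd_dvd_left a b
  obtain ⟨b', hb⟩ : g ∣ b := Int.gcd_dvd_right a b
  have ha' : a / g = a' := by rw [ha, Int.mul_ediv_cancel_left _ hg0]
  have hb' : (-b) / g = -b' := by
    rw [hb, show -(g * b') = g * (-b') by ring, Int.mul_ediv_cancel_left _ hg0]
  have hbez : k * a' + l * b' = 1 := by
    have h1 : g * (k * a' + l * b') = g * 1 := by
      calc g * (k * a' + l * b') = k * (g * a') + l * (g * b') := by ring
        _ = k * a + l * b := by rw [← ha, ← hb]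
        _ = g * 1 := by rw [mul_one]; exact hkl
    exact mul_left_cancel₀ hg0 h1
  have hcop : IsCoprime a' b' := ⟨k, l, by linarith [hbez]⟩
  have ha'0 : a' ≠ 0 := fun h => ha0 (by rw [ha, h, mul_zero])
  have hgc : IsCoprime g c := by
    rw [Int.isCoprime_iff_gcd_eq_one]
    have h1 : Int.gcd ((Int.gcd a b : ℤ)) c = Nat.gcd (Nat.gcd a.natAbs b.natAbs) c.natAbs := by
      simp [Int.gcd, Int.natAbs_natCast]
    have h2 : Int.gcd a ((Int.gcd b c : ℤ)) = Nat.gcd a.natAbs (Nat.gcd b.natAbs c.natAbs) := by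
      simp [Int.gcd, Int.natAbs_natCast]
    rw [hg, h1, Nat.gcd_assoc, ← h2, hgcd]
  have hu0 : u 0 = -b' := by rw [hu]; simpa using hb'
  have hu1 : u 1 = a' := by rw [hu]; simpa using ha'
  have hu2 : u 2 = 0 := by rw [hu]; rfl
  have hτ0 : τ 0 = -(k * c) := by rw [hτ]; simp
  have hτ1 : τ 1 = -(l * c) := by rw [hτ]; simp
  have hτ2 : τ 2 = g := by rw [hτ]; simpa using hkl
  constructor
  · intro hp
    have hdvd : g ∣ c * p 2 := ⟨-(a' * p 0 + b' * p 1), by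
      have h3 : a * p 0 + b * p 1 = -(c * p 2) := by linarith
      rw [ha, hb] at h3; linarith⟩
    obtain ⟨n, hn⟩ := hgc.dvd_of_dvd_mul_left hdvd
    set q0 : ℤ := p 0 + n * (k * c) with hq0
    set q1 : ℤ := p 1 + n * (l * c) with hq1
    have h2 : a' * q0 + b' * q1 = 0 := by
      have hq : a * q0 + b * q1 = 0 := by
        rw [hq0, hq1]
        have h3 : a * p 0 + b * p 1 + c * (g * n) = 0 := by rw [← hn]; linarith
        linear_combination h3 + n * c * hkl
      rw [ha, hb] at hq
      have := mul_eq_zero.mp (show g * (a' * q0 + b' * q1) = 0 by linear_combination hq)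
      tauto
    obtain ⟨m, hm⟩ : a' ∣ q1 :=
      hcop.dvd_of_dvd_mul_left ⟨-q0, by linear_combination h2⟩
    have hq0m : q0 = -b' * m :=
      mul_left_cancel₀ ha'0 (by linear_combination h2 - b' * hm)
    refine ⟨m, n, funext fun i => ?_⟩
    fin_cases i
    · show p 0 = (m • u + n • τ) 0
      simp only [Pi.add_apply, Pi.smul_apply, smul_eq_mul]
      rw [hu0, hτ0]; rw [hq0] at hq0m; linear_combination hq0m
    · show p 1 = (m • u + n • τ) 1
      simp only [Pi.add_apply, Pi.smul_apply, smul_eq_mul]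
      rw [hu1, hτ1]; rw [hq1] at hm; linear_combination hm
    · show p 2 = (m • u + n • τ) 2
      simp only [Pi.add_apply, Pi.smul_apply, smul_eq_mul]
      rw [hu2, hτ2]; linear_combination hn
  · rintro ⟨m, n, rfl⟩
    simp only [Pi.add_apply, Pi.smul_apply, smul_eq_mul]
    rw [hu0, hu1, hu2, hτ0, hτ1, hτ2]
    rw [ha, hb] at hkl ⊢
    linear_combination (-(n * c)) * hkl
end

section
/- Let (a,b,c) be a primitive Pythagorean triple with a²+b²=c², and let C be the cube with vertex set {(x,y,z+m c) : (x,y) a vertex of the square with corners (0,0),(a,b),(a−b,a+b),(−b,a), m ∈ {0,1}} (the square translated along (0,0,c)). Then for every positive integer t, the number of lattice points of ℤ³ in the dilate tC equals (ct+1)(c²t²+2t+1). -/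
set_option maxHeartbeats 2000000 in
lemma hull_char (a b c : ℝ) (hc : 0 < c) (hab : a ^ 2 + b ^ 2 = c ^ 2)
    (p : Fin 3 → ℝ) :
    p ∈ convexHull ℝ ({![0, 0, 0], ![a, b, 0], ![a - b, a + b, 0],
      ![-b, a, 0], ![0, 0, c], ![a, b, c],
      ![a - b, a + b, c], ![-b, a, c]} : Set (Fin 3 → ℝ)) ↔
    (0 ≤ a * p 0 + b * p 1 ∧ a * p 0 + b * p 1 ≤ c ^ 2 ∧
     0 ≤ a * p 1 - b * p 0 ∧ a * p 1 - b * p 0 ≤ c ^ 2 ∧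
     0 ≤ p 2 ∧ p 2 ≤ c) := by
  have hc2 : (0:ℝ) < c ^ 2 := by positivity
  set S : Set (Fin 3 → ℝ) := {![0, 0, 0], ![a, b, 0], ![a - b, a + b, 0],
      ![-b, a, 0], ![0, 0, c], ![a, b, c], ![a - b, a + b, c], ![-b, a, c]} with hS
  constructor
  · -- hull ⊆ polytope
    set K : Set (Fin 3 → ℝ) := {q | 0 ≤ a * q 0 + b * q 1 ∧ a * q 0 + b * q 1 ≤ c ^ 2 ∧
       0 ≤ a * q 1 - b * q 0 ∧ a * q 1 - b * q 0 ≤ c ^ 2 ∧ 0 ≤ q 2 ∧ q 2 ≤ c} with hK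
    have hsub : S ⊆ K := by
      intro q hq
      simp only [hS, Set.mem_insert_iff, Set.mem_singleton_iff] at hq
      rcases hq with h|h|h|h|h|h|h|h <;> subst h <;>
        refine ⟨?_, ?_, ?_, ?_, ?_, ?_⟩ <;> simp <;> nlinarith
    have hconv : Convex ℝ K := by
      intro x hx y hy s u hs hu hsu
      obtain ⟨h1, h2, h3, h4, h5, h6⟩ := hx
      obtain ⟨g1, g2, g3, g4, g5, g6⟩ := hy
      refine ⟨?_, ?_, ?_, ?_, ?_, ?_⟩ <;>
        simp only [Pi.add_apply, Pi.smul_apply, smul_eq_mul] <;> nlinarith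
    exact fun h => convexHull_min hsub hconv h
  · rintro ⟨h1, h2, h3, h4, h5, h6⟩
    set u : ℝ := (a * p 0 + b * p 1) / c ^ 2 with hu
    set v : ℝ := (a * p 1 - b * p 0) / c ^ 2 with hv
    set w : ℝ := p 2 / c with hw
    have hu0 : 0 ≤ u := div_nonneg h1 hc2.le
    have hu1 : u ≤ 1 := (div_le_one hc2).2 h2
    have hv0 : 0 ≤ v := div_nonneg h3 hc2.le
    have hv1 : v ≤ 1 := (div_le_one hc2).2 h4
    have hw0 : 0 ≤ w := div_nonneg h5 hc.le
    have hw1 : w ≤ 1 := (div_le_one hc).2 h6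
    have hcv := convex_convexHull ℝ S
    have m0 : (![0,0,0] : Fin 3 → ℝ) ∈ convexHull ℝ S := subset_convexHull ℝ S (by rw [hS]; exact Set.mem_insert _ _)
    have m1 : (![a,b,0] : Fin 3 → ℝ) ∈ convexHull ℝ S := subset_convexHull ℝ S (by rw [hS]; exact Set.mem_insert_of_mem _ (Set.mem_insert _ _))
    have m2 : (![a-b,a+b,0] : Fin 3 → ℝ) ∈ convexHull ℝ S := subset_convexHull ℝ S (by rw [hS]; exact Set.mem_insert_of_mem _ (Set.mem_insert_of_mem _ (Set.mem_insert _ _)))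
    have m3 : (![-b,a,0] : Fin 3 → ℝ) ∈ convexHull ℝ S := subset_convexHull ℝ S (by rw [hS]; exact Set.mem_insert_of_mem _ (Set.mem_insert_of_mem _ (Set.mem_insert_of_mem _ (Set.mem_insert _ _))))
    have m4 : (![0,0,c] : Fin 3 → ℝ) ∈ convexHull ℝ S := subset_convexHull ℝ S (by rw [hS]; exact Set.mem_insert_of_mem _ (Set.mem_insert_of_mem _ (Set.mem_insert_of_mem _ (Set.mem_insert_of_mem _ (Set.mem_insert _ _)))))
    have m5 : (![a,b,c] : Fin 3 → ℝ) ∈ convexHull ℝ S := subset_convexHull ℝ S (by rw [hS]; exact Set.mem_insert_of_mem _ (Set.mem_insert_of_mem _ (Set.mem_insert_of_mem _ (Set.mem_insert_of_mem _ (Set.mem_insert_of_mem _ (Set.mem_insert _ _))))))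
    have m6 : (![a-b,a+b,c] : Fin 3 → ℝ) ∈ convexHull ℝ S := subset_convexHull ℝ S (by rw [hS]; exact Set.mem_insert_of_mem _ (Set.mem_insert_of_mem _ (Set.mem_insert_of_mem _ (Set.mem_insert_of_mem _ (Set.mem_insert_of_mem _ (Set.mem_insert_of_mem _ (Set.mem_insert _ _)))))))
    have m7 : (![-b,a,c] : Fin 3 → ℝ) ∈ convexHull ℝ S := subset_convexHull ℝ S (by rw [hS]; exact Set.mem_insert_of_mem _ (Set.mem_insert_of_mem _ (Set.mem_insert_of_mem _ (Set.mem_insert_of_mem _ (Set.mem_insert_of_mem _ (Set.mem_insert_of_mem _ (Set.mem_insert_of_mem _ (rfl))))))))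
    have h1u : (0:ℝ) ≤ 1 - u := by linarith
    have h1v : (0:ℝ) ≤ 1 - v := by linarith
    have h1w : (0:ℝ) ≤ 1 - w := by linarith
    -- bottom square point
    have hP1 : ((1-u) • ![0,0,0] + u • ![a,b,0] : Fin 3 → ℝ) ∈ convexHull ℝ S :=
      hcv m0 m1 h1u hu0 (by ring)
    have hQ1 : ((1-u) • ![-b,a,0] + u • ![a-b,a+b,0] : Fin 3 → ℝ) ∈ convexHull ℝ S :=
      hcv m3 m2 h1u hu0 (by ring)
    have hbot : ((1-v) • ((1-u) • ![0,0,0] + u • ![a,b,0]) +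
        v • ((1-u) • ![-b,a,0] + u • ![a-b,a+b,0]) : Fin 3 → ℝ) ∈ convexHull ℝ S :=
      hcv hP1 hQ1 h1v hv0 (by ring)
    have hP2 : ((1-u) • ![0,0,c] + u • ![a,b,c] : Fin 3 → ℝ) ∈ convexHull ℝ S :=
      hcv m4 m5 h1u hu0 (by ring)
    have hQ2 : ((1-u) • ![-b,a,c] + u • ![a-b,a+b,c] : Fin 3 → ℝ) ∈ convexHull ℝ S :=
      hcv m7 m6 h1u hu0 (by ring)
    have htop : ((1-v) • ((1-u) • ![0,0,c] + u • ![a,b,c]) +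
        v • ((1-u) • ![-b,a,c] + u • ![a-b,a+b,c]) : Fin 3 → ℝ) ∈ convexHull ℝ S :=
      hcv hP2 hQ2 h1v hv0 (by ring)
    have hfinal := hcv hbot htop h1w hw0 (by ring : (1-w) + w = 1)
    have hpeq : p = (1-w) • ((1-v) • ((1-u) • ![0,0,0] + u • ![a,b,0]) +
        v • ((1-u) • ![-b,a,0] + u • ![a-b,a+b,0])) +
        w • ((1-v) • ((1-u) • ![0,0,c] + u • ![a,b,c]) +
        v • ((1-u) • ![-b,a,c] + u • ![a-b,a+b,c])) := by
      funext i
      fin_cases i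
      all_goals simp only [Fin.zero_eta, Fin.mk_one, Fin.reduceFinMk]
      · simp only [Pi.add_apply, Pi.smul_apply, smul_eq_mul, Matrix.cons_val_zero,
          Matrix.cons_val_one, Matrix.head_cons, Matrix.cons_val_two, Matrix.tail_cons]
        rw [hu, hv, hw]; field_simp; ring_nf
        linear_combination (-(p 0 * c ^ 3)) * hab
      · simp only [Pi.add_apply, Pi.smul_apply, smul_eq_mul, Matrix.cons_val_zero,
          Matrix.cons_val_one, Matrix.head_cons, Matrix.cons_val_two, Matrix.tail_cons]
        rw [hu, hv, hw]; field_simp; ring_nf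
        linear_combination (-(p 1 * c ^ 3)) * hab
      · simp only [Pi.add_apply, Pi.smul_apply, smul_eq_mul, Matrix.cons_val_zero,
          Matrix.cons_val_one, Matrix.head_cons, Matrix.cons_val_two, Matrix.tail_cons]
        rw [hu, hv, hw]; field_simp; ring_nf
    rw [hpeq]
    exact hfinal



lemma aux_k_iff (d t r k : ℤ) (hd : 0 < d) :
    (r - t * d ≤ d * k ∧ d * k ≤ r) ↔
    (r / d - t + (if d ∣ r then 0 else 1) ≤ k ∧ k ≤ r / d) := by
  have hdvd := Int.mul_ediv_add_emod r d
  have hnn : 0 ≤ r % d := Int.emod_nonneg r hd.ne'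
  have hlt : r % d < d := Int.emod_lt_of_pos r hd
  have hub : d * k ≤ r ↔ k ≤ r / d := by
    rw [Int.le_ediv_iff_mul_le hd, mul_comm]
  have hmoddvd : d ∣ r ↔ r % d = 0 := Int.dvd_iff_emod_eq_zero
  constructor
  · rintro ⟨hl, hu⟩
    refine ⟨?_, hub.1 hu⟩
    by_cases h : d ∣ r
    · rw [if_pos h]
      have h0 : r % d = 0 := hmoddvd.1 h
      have : d * (r / d - t) ≤ d * k := by nlinarith
      have := le_of_mul_le_mul_left this hd
      linarith
    · rw [if_neg h]
      have h0 : 0 < r % d := lt_of_le_of_ne hnn (fun hh => h (hmoddvd.2 hh.symm))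
      have : d * (r / d - t) < d * k := by nlinarith
      have := lt_of_mul_lt_mul_left this hd.le
      linarith
  · rintro ⟨hl, hu⟩
    refine ⟨?_, hub.2 hu⟩
    by_cases h : d ∣ r
    · rw [if_pos h] at hl
      have h0 : r % d = 0 := hmoddvd.1 h
      have : d * (r / d - t) ≤ d * k := by
        apply mul_le_mul_of_nonneg_left _ hd.le
        linarith
      nlinarith
    · rw [if_neg h] at hl
      have : d * (r / d - t + 1) ≤ d * k := by
        apply mul_le_mul_of_nonneg_left _ hd.le
        linarith
      nlinarith

lemma aux_coprime (a b c x0 y0 : ℤ) (hpyth : a ^ 2 + b ^ 2 = c ^ 2)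
    (hprim : Int.gcd a b = 1) (hbez : a * x0 + b * y0 = 1) :
    IsCoprime (a * y0 - b * x0) (c ^ 2) := by
  set q1 : ℤ := a * y0 - b * x0 with hq1
  have hA : a = b * q1 + c ^ 2 * x0 := by linear_combination (-a) * hbez + x0 * hpyth
  have hB : b = -(a * q1) + c ^ 2 * y0 := by linear_combination (-b) * hbez + y0 * hpyth
  obtain ⟨u, v, huv⟩ := Int.isCoprime_iff_gcd_eq_one.2 hprim
  exact ⟨u * b - v * a, u * x0 + v * y0, by
    linear_combination (u * b - v * a) * hq1 + (u * a + v * b) * hbez + huv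
      - (u * x0 + v * y0) * hpyth⟩

lemma square_count (a b c t : ℤ) (ha : 0 < a) (hb : 0 < b) (hc : 0 < c)
    (hpyth : a ^ 2 + b ^ 2 = c ^ 2) (hprim : Int.gcd a b = 1) (ht : 0 < t) :
    ∃ F : Finset (ℤ × ℤ),
      (↑F = {q : ℤ × ℤ | 0 ≤ a * q.1 + b * q.2 ∧ a * q.1 + b * q.2 ≤ t * c ^ 2 ∧
        0 ≤ a * q.2 - b * q.1 ∧ a * q.2 - b * q.1 ≤ t * c ^ 2}) ∧
      (F.card : ℤ) = c ^ 2 * t ^ 2 + 2 * t + 1 := by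
  obtain ⟨x0, y0, hbez⟩ := Int.isCoprime_iff_gcd_eq_one.2 hprim
  rw [mul_comm x0 a, mul_comm y0 b] at hbez
  set d : ℤ := c ^ 2 with hdd
  have hd : 0 < d := by positivity
  set q1 : ℤ := a * y0 - b * x0 with hq1
  have hcop : IsCoprime q1 d := aux_coprime a b c x0 y0 hpyth hprim hbez
  set B : Finset ((_ : ℤ) × ℤ) := (Finset.Icc 0 (t * d)).sigma
    (fun m => Finset.Icc (m * q1 / d - t + (if d ∣ m * q1 then 0 else 1)) (m * q1 / d)) with hB
  set g : (Σ _ : ℤ, ℤ) → ℤ × ℤ := fun s => (s.1 * x0 + b * s.2, s.1 * y0 - a * s.2) with hg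
  have hginj : Function.Injective g := by
    rintro ⟨m, k⟩ ⟨m', k'⟩ h
    simp only [hg, Prod.mk.injEq] at h
    obtain ⟨h1, h2⟩ := h
    have hm : m = m' := by linear_combination a * h1 + b * h2 + (m' - m) * hbez
    subst hm
    have hk : k = k' := by
      have : b * k = b * k' := by linarith
      exact mul_left_cancel₀ hb.ne' this
    rw [hk]
  refine ⟨B.image g, ?_, ?_⟩
  · ext ⟨x, y⟩
    simp only [Finset.coe_image, Set.mem_image, Finset.mem_coe, Set.mem_setOf_eq]
    constructor
    · rintro ⟨⟨m, k⟩, hs, hgs⟩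
      rw [hB, Finset.mem_sigma, Finset.mem_Icc, Finset.mem_Icc] at hs
      obtain ⟨⟨hm0, hm1⟩, hk0, hk1⟩ := hs
      have hkk := (aux_k_iff d t (m * q1) k hd).2 ⟨hk0, hk1⟩
      simp only [hg, Prod.mk.injEq] at hgs
      obtain ⟨hx, hy⟩ := hgs
      subst hx; subst hy
      have e1 : a * (m * x0 + b * k) + b * (m * y0 - a * k) = m := by
        linear_combination m * hbez
      have e2 : a * (m * y0 - a * k) - b * (m * x0 + b * k) = m * q1 - d * k := by
        rw [hq1]; linear_combination (-k) * hpyth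
      refine ⟨by rw [e1]; exact hm0, by rw [e1]; exact hm1, ?_, ?_⟩
      · rw [e2]; linarith [hkk.2]
      · rw [e2]; linarith [hkk.1]
    · rintro ⟨h1, h2, h3, h4⟩
      set m : ℤ := a * x + b * y with hm
      have hdvd1 : (x - m * x0) * a = b * (m * y0 - y) := by
        rw [hm]; linear_combination (-(a * x + b * y)) * hbez
      have hdvdb : b ∣ x - m * x0 :=
        (Int.isCoprime_iff_gcd_eq_one.2 hprim).symm.dvd_of_dvd_mul_right
          ⟨m * y0 - y, hdvd1⟩
      obtain ⟨k, hk⟩ := hdvdb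
      have hy : y = m * y0 - a * k := by
        rw [hk] at hdvd1
        have h6 : b * (a * k) = b * (m * y0 - y) := by linarith [hdvd1]
        have := mul_left_cancel₀ hb.ne' h6
        linarith
      have hx : x = m * x0 + b * k := by linarith [hk]
      have e2 : a * y - b * x = m * q1 - d * k := by
        rw [hx, hy, hq1]; linear_combination (-k) * hpyth
      rw [e2] at h3 h4
      have hkk := (aux_k_iff d t (m * q1) k hd).1 ⟨by linarith, by linarith⟩
      refine ⟨⟨m, k⟩, ?_, ?_⟩
      · rw [hB, Finset.mem_sigma, Finset.mem_Icc, Finset.mem_Icc]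
        exact ⟨⟨h1, h2⟩, hkk.1, hkk.2⟩
      · simp only [hg, Prod.mk.injEq]; exact ⟨hx.symm, hy.symm⟩
  · rw [Finset.card_image_of_injective _ hginj, hB, Finset.card_sigma]
    have hcards : ∀ m ∈ Finset.Icc (0:ℤ) (t * d),
        (Finset.Icc (m * q1 / d - t + (if d ∣ m * q1 then 0 else 1)) (m * q1 / d)).card
          = t.toNat + (if d ∣ m * q1 then 1 else 0) := by
      intro m _
      rw [Int.card_Icc]
      split_ifs with h <;> omega
    rw [Finset.sum_congr rfl hcards, Finset.sum_add_distrib, Finset.sum_const,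
      Finset.sum_boole]
    have hfilter : (Finset.Icc (0:ℤ) (t*d)).filter (fun m => d ∣ m * q1)
        = (Finset.Icc (0:ℤ) t).image (· * d) := by
      ext m
      simp only [Finset.mem_filter, Finset.mem_Icc, Finset.mem_image]
      constructor
      · rintro ⟨⟨hm0, hm1⟩, hdv⟩
        obtain ⟨j, hj⟩ := hcop.symm.dvd_of_dvd_mul_right hdv
        have hj0 : 0 ≤ j := by
          have := (mul_le_mul_iff_right₀ hd).1 (by linarith : d * 0 ≤ d * j)
          linarith
        have hj1 : j ≤ t := by
          have := (mul_le_mul_iff_right₀ hd).1 (by linarith : d * j ≤ d * t)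
          linarith
        exact ⟨j, ⟨hj0, hj1⟩, by linear_combination -hj⟩
      · rintro ⟨j, ⟨hj0, hj1⟩, hjm⟩
        have hmj : m = d * j := by linear_combination -hjm
        refine ⟨⟨?_, ?_⟩, ⟨j * q1, by rw [hmj]; ring⟩⟩
        · rw [hmj]; positivity
        · rw [hmj]
          calc d * j ≤ d * t := by
                exact mul_le_mul_of_nonneg_left hj1 hd.le
            _ = t * d := by ring
    rw [hfilter, Finset.card_image_of_injective _ (mul_left_injective₀ hd.ne')]
    have htd : 0 < t * d := mul_pos ht hd
    have e1 : ((Finset.Icc (0:ℤ) (t*d)).card : ℤ) = t * d + 1 := by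
      rw [Int.card_Icc]; omega
    have e2 : ((Finset.Icc (0:ℤ) t).card : ℤ) = t + 1 := by
      rw [Int.card_Icc]; omega
    rw [smul_eq_mul]
    push_cast
    rw [e1, e2, Int.toNat_of_nonneg ht.le, hdd]
    ring


open Pointwise
theorem pythagorean_cube_ehrhart (a b c : ℤ)
    (ha : 0 < a) (hb : 0 < b) (hc : 0 < c)
    (hpyth : a ^ 2 + b ^ 2 = c ^ 2) (hprim : Int.gcd a b = 1)
    (C : Set (Fin 3 → ℝ))
    (hC : C = convexHull ℝ {![0, 0, 0], ![(a : ℝ), b, 0], ![(a : ℝ) - b, (a : ℝ) + b, 0],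
      ![-(b : ℝ), a, 0], ![0, 0, (c : ℝ)], ![(a : ℝ), b, c],
      ![(a : ℝ) - b, (a : ℝ) + b, c], ![-(b : ℝ), a, c]}) :
    ∀ t : ℕ, 0 < t →
      (Set.ncard {p : Fin 3 → ℤ | (fun i => (p i : ℝ)) ∈ (t : ℝ) • C} : ℤ)
        = (c * t + 1) * (c ^ 2 * t ^ 2 + 2 * t + 1) := by
  intro t ht
  set T : ℤ := (t : ℤ) with hT
  have hT0 : 0 < T := by rw [hT]; exact_mod_cast ht
  obtain ⟨F, hFcoe, hFcard⟩ := square_count a b c T ha hb hc hpyth hprim hT0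
  have htR : (0:ℝ) < (t:ℝ) := by exact_mod_cast ht
  have habR : (a:ℝ)^2 + (b:ℝ)^2 = (c:ℝ)^2 := by exact_mod_cast hpyth
  have hcR : (0:ℝ) < (c:ℝ) := by exact_mod_cast hc
  have key : ∀ p : Fin 3 → ℤ, ((fun i => (p i : ℝ)) ∈ (t:ℝ) • C ↔
      (0 ≤ a * p 0 + b * p 1 ∧ a * p 0 + b * p 1 ≤ T * c ^ 2 ∧
       0 ≤ a * p 1 - b * p 0 ∧ a * p 1 - b * p 0 ≤ T * c ^ 2 ∧
       0 ≤ p 2 ∧ p 2 ≤ T * c)) := by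
    intro p
    rw [Set.mem_smul_set_iff_inv_smul_mem₀ (ne_of_gt htR), hC,
      hull_char (a:ℝ) (b:ℝ) (c:ℝ) hcR habR]
    simp only [Pi.smul_apply, smul_eq_mul]
    rw [show (a:ℝ) * ((t:ℝ)⁻¹ * ((p 0 : ℤ):ℝ)) + (b:ℝ) * ((t:ℝ)⁻¹ * ((p 1 : ℤ):ℝ))
        = (t:ℝ)⁻¹ * ((a:ℝ) * ((p 0 : ℤ):ℝ) + (b:ℝ) * ((p 1 : ℤ):ℝ)) from by ring,
      show (a:ℝ) * ((t:ℝ)⁻¹ * ((p 1 : ℤ):ℝ)) - (b:ℝ) * ((t:ℝ)⁻¹ * ((p 0 : ℤ):ℝ))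
        = (t:ℝ)⁻¹ * ((a:ℝ) * ((p 1 : ℤ):ℝ) - (b:ℝ) * ((p 0 : ℤ):ℝ)) from by ring]
    simp only [mul_nonneg_iff_of_pos_left (inv_pos.2 htR), inv_mul_le_iff₀ htR]
    constructor
    · rintro ⟨h1, h2, h3, h4, h5, h6⟩
      exact ⟨by exact_mod_cast h1, by exact_mod_cast h2, by exact_mod_cast h3,
        by exact_mod_cast h4, by exact_mod_cast h5, by exact_mod_cast h6⟩
    · rintro ⟨h1, h2, h3, h4, h5, h6⟩
      exact ⟨by exact_mod_cast h1, by exact_mod_cast h2, by exact_mod_cast h3,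
        by exact_mod_cast h4, by exact_mod_cast h5, by exact_mod_cast h6⟩
  set F3 : Finset (Fin 3 → ℤ) := (F ×ˢ Finset.Icc (0:ℤ) (T * c)).image
      (fun q : (ℤ × ℤ) × ℤ => ![q.1.1, q.1.2, q.2]) with hF3
  have hinj3 : Function.Injective (fun q : (ℤ × ℤ) × ℤ => ![q.1.1, q.1.2, q.2]) := by
    rintro ⟨⟨x, y⟩, z⟩ ⟨⟨x', y'⟩, z'⟩ h
    have h0 := congrFun h 0
    have h1 := congrFun h 1
    have h2 := congrFun h 2
    simp only [Matrix.cons_val_zero, Matrix.cons_val_one, Matrix.head_cons,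
      Matrix.cons_val_two, Matrix.tail_cons] at h0 h1 h2
    simp only [Prod.mk.injEq]
    exact ⟨⟨h0, h1⟩, h2⟩
  have hset : {p : Fin 3 → ℤ | (fun i => (p i : ℝ)) ∈ (t:ℝ) • C} = ↑F3 := by
    ext p
    rw [Set.mem_setOf_eq, key p, hF3]
    simp only [Finset.coe_image, Set.mem_image, Finset.mem_coe, Finset.mem_product,
      Finset.mem_Icc]
    constructor
    · rintro ⟨h1, h2, h3, h4, h5, h6⟩
      refine ⟨((p 0, p 1), p 2), ⟨?_, h5, h6⟩, ?_⟩
      · rw [← Finset.mem_coe, hFcoe]; exact ⟨h1, h2, h3, h4⟩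
      · funext i; fin_cases i <;> simp
    · rintro ⟨⟨⟨x, y⟩, z⟩, ⟨hF, hz0, hz1⟩, hqp⟩
      rw [← Finset.mem_coe, hFcoe] at hF
      obtain ⟨h1, h2, h3, h4⟩ := hF
      subst hqp
      simp only [Matrix.cons_val_zero, Matrix.cons_val_one, Matrix.head_cons,
        Matrix.cons_val_two, Matrix.tail_cons]
      exact ⟨h1, h2, h3, h4, hz0, hz1⟩
  rw [hset, Set.ncard_coe_finset, hF3, Finset.card_image_of_injective _ hinj3,
    Finset.card_product, Int.card_Icc]
  have hTc : 0 < T * c := mul_pos hT0 hc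
  have htn : ((T * c + 1 - 0).toNat : ℤ) = T * c + 1 := by omega
  push_cast
  rw [htn, hFcard]
  ring
end

section
/- The cube with vertex at the origin and edge vectors (−1,2,2), (2,−1,2), (2,2,−1) has Ehrhart polynomial L(t) = (3t+1)(9t²+1) = 27t³+9t²+3t+1. -/
open Pointwise

/-- Number of lattice points of ℤ³ in the dilate `t•C` of the lattice cube (parallelepiped)
with a vertex at the origin and edge vectors `v₁ v₂ v₃`. -/
noncomputable def cubeCount (v₁ v₂ v₃ : Fin 3 → ℤ) (t : ℕ) : ℕ :=
  Set.ncard {p : Fin 3 → ℤ | ∃ x y z : ℝ, x ∈ Set.Icc (0 : ℝ) t ∧ y ∈ Set.Icc (0 : ℝ) t ∧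
    z ∈ Set.Icc (0 : ℝ) t ∧ ∀ k, (p k : ℝ) = x * v₁ k + y * v₂ k + z * v₃ k}

/-- gcd of the three coordinates of an integer vector. -/
def gcd3 (v : Fin 3 → ℤ) : ℕ := Int.gcd (v 0) (Int.gcd (v 1) (v 2))

/-- Dot product of integer vectors in ℤ³. -/
def dot3 (u v : Fin 3 → ℤ) : ℤ := u 0 * v 0 + u 1 * v 1 + u 2 * v 2

lemma count1 (t : ℕ) (r : ℤ) (h0 : 0 ≤ r) (h9 : r < 9) :
    ((Finset.Icc (0:ℤ) (9*t)).filter (fun x => x % 9 = r)).card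
      = t + (if r = 0 then 1 else 0) := by
  induction t with
  | zero =>
      simp only [Nat.cast_zero, mul_zero, Finset.Icc_self, Finset.filter_singleton]
      rcases eq_or_ne r 0 with h | h
      · subst h; norm_num
      · rw [if_neg (by omega), if_neg h]; simp
  | succ n ih =>
      have hsplit : Finset.Icc (0:ℤ) (9*((n:ℤ)+1)) =
          Finset.Icc (0:ℤ) (9*n) ∪ Finset.Ioc (9*(n:ℤ)) (9*((n:ℤ)+1)) := by
        ext x
        simp only [Finset.mem_Icc, Finset.mem_union, Finset.mem_Ioc]
        omega
      have hdisj : Disjoint ((Finset.Icc (0:ℤ) (9*n)).filter (fun x => x % 9 = r))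
          ((Finset.Ioc (9*(n:ℤ)) (9*((n:ℤ)+1))).filter (fun x => x % 9 = r)) := by
        simp only [Finset.disjoint_left, Finset.mem_filter, Finset.mem_Icc, Finset.mem_Ioc]
        intro a ha hb
        omega
      have hone : ((Finset.Ioc (9*(n:ℤ)) (9*((n:ℤ)+1))).filter (fun x => x % 9 = r))
          = {9*(n:ℤ) + (if r = 0 then 9 else r)} := by
        ext x
        simp only [Finset.mem_filter, Finset.mem_Ioc, Finset.mem_singleton]
        rcases eq_or_ne r 0 with h | h <;> simp only [h, if_true, if_false, if_pos, if_neg] <;> omega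
      have : (9:ℤ)*((n:ℕ):ℤ) + 9 = 9*(((n+1:ℕ)):ℤ) := by push_cast; ring
      rw [show ((9:ℤ)*((n+1:ℕ):ℤ)) = 9*((n:ℤ)+1) by push_cast; ring, hsplit,
        Finset.filter_union, Finset.card_union_of_disjoint hdisj, ih, hone,
        Finset.card_singleton]
      omega
noncomputable def R27 : Finset (ℤ×ℤ×ℤ) :=
  ((Finset.Icc (0:ℤ) 8) ×ˢ (Finset.Icc (0:ℤ) 8) ×ˢ (Finset.Icc (0:ℤ) 8)).filter
   (fun x : ℤ×ℤ×ℤ => 9 ∣ (-x.1+2*x.2.1+2*x.2.2) ∧ 9 ∣ (2*x.1-x.2.1+2*x.2.2) ∧ 9 ∣ (2*x.1+2*x.2.1-x.2.2))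

def chi (r : ℤ) : ℕ := if r = 0 then 1 else 0

lemma cardF (t : ℕ) :
    (((Finset.Icc (0:ℤ) (9*t)) ×ˢ (Finset.Icc (0:ℤ) (9*t)) ×ˢ (Finset.Icc (0:ℤ) (9*t))).filter
      (fun x : ℤ×ℤ×ℤ => 9 ∣ (-x.1+2*x.2.1+2*x.2.2) ∧ 9 ∣ (2*x.1-x.2.1+2*x.2.2) ∧
        9 ∣ (2*x.1+2*x.2.1-x.2.2))).card
      = 27*t^3 + 9*t^2 + 3*t + 1 := by
  rw [Finset.card_eq_sum_card_fiberwise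
    (f := fun x : ℤ×ℤ×ℤ => (x.1 % 9, x.2.1 % 9, x.2.2 % 9)) (t := R27)
    (by
      intro x hx
      simp only [Finset.mem_coe, Finset.mem_filter, Finset.mem_product, Finset.mem_Icc, R27] at hx ⊢
      omega)]
  have key : ∀ r ∈ R27,
      ((((Finset.Icc (0:ℤ) (9*t)) ×ˢ (Finset.Icc (0:ℤ) (9*t)) ×ˢ (Finset.Icc (0:ℤ) (9*t))).filter
        (fun x : ℤ×ℤ×ℤ => 9 ∣ (-x.1+2*x.2.1+2*x.2.2) ∧ 9 ∣ (2*x.1-x.2.1+2*x.2.2) ∧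
          9 ∣ (2*x.1+2*x.2.1-x.2.2))).filter
        (fun x => (x.1 % 9, x.2.1 % 9, x.2.2 % 9) = r)).card
      = (t + chi r.1) * ((t + chi r.2.1) * (t + chi r.2.2)) := by
    intro r hr
    have hmem : (0 ≤ r.1 ∧ r.1 ≤ 8) ∧ ((0 ≤ r.2.1 ∧ r.2.1 ≤ 8) ∧ (0 ≤ r.2.2 ∧ r.2.2 ≤ 8)) ∧
        (9 ∣ (-r.1+2*r.2.1+2*r.2.2) ∧ 9 ∣ (2*r.1-r.2.1+2*r.2.2) ∧ 9 ∣ (2*r.1+2*r.2.1-r.2.2)) := by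
      simpa [R27, Finset.mem_filter, Finset.mem_product, Finset.mem_Icc, and_assoc] using hr
    have heq : ((((Finset.Icc (0:ℤ) (9*t)) ×ˢ (Finset.Icc (0:ℤ) (9*t)) ×ˢ (Finset.Icc (0:ℤ) (9*t))).filter
        (fun x : ℤ×ℤ×ℤ => 9 ∣ (-x.1+2*x.2.1+2*x.2.2) ∧ 9 ∣ (2*x.1-x.2.1+2*x.2.2) ∧
          9 ∣ (2*x.1+2*x.2.1-x.2.2))).filter
        (fun x => (x.1 % 9, x.2.1 % 9, x.2.2 % 9) = r))
        = ((Finset.Icc (0:ℤ) (9*t)).filter (fun x => x % 9 = r.1)) ×ˢ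
          (((Finset.Icc (0:ℤ) (9*t)).filter (fun x => x % 9 = r.2.1)) ×ˢ
           ((Finset.Icc (0:ℤ) (9*t)).filter (fun x => x % 9 = r.2.2))) := by
      ext x
      simp only [Finset.mem_filter, Finset.mem_product, Finset.mem_Icc, Prod.ext_iff]
      constructor
      · rintro ⟨⟨⟨h1, ⟨h2, h3⟩⟩, _⟩, h4, h5, h6⟩
        exact ⟨⟨h1, h4⟩, ⟨h2, h5⟩, ⟨h3, h6⟩⟩
      · rintro ⟨⟨h1, h4⟩, ⟨h2, h5⟩, ⟨h3, h6⟩⟩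
        refine ⟨⟨⟨h1, h2, h3⟩, ?_, ?_, ?_⟩, h4, h5, h6⟩ <;> omega
    rw [heq, Finset.card_product, Finset.card_product,
      count1 t r.1 hmem.1.1 (by omega), count1 t r.2.1 hmem.2.1.1.1 (by omega),
      count1 t r.2.2 hmem.2.1.2.1 (by omega)]
    rfl
  rw [Finset.sum_congr rfl key]
  have expand : ∀ r : ℤ×ℤ×ℤ, (t + chi r.1) * ((t + chi r.2.1) * (t + chi r.2.2))
      = t^3 + (chi r.1 + chi r.2.1 + chi r.2.2) * t^2
        + (chi r.1 * chi r.2.1 + chi r.1 * chi r.2.2 + chi r.2.1 * chi r.2.2) * t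
        + chi r.1 * chi r.2.1 * chi r.2.2 := by
    intro r; ring
  rw [Finset.sum_congr rfl fun r _ => expand r]
  rw [Finset.sum_add_distrib, Finset.sum_add_distrib, Finset.sum_add_distrib,
    ← Finset.sum_mul, ← Finset.sum_mul, Finset.sum_const]
  have c1 : R27.card = 27 := by decide
  have c2 : (R27.sum fun r => chi r.1 + chi r.2.1 + chi r.2.2) = 9 := by decide
  have c3 : (R27.sum fun r => chi r.1 * chi r.2.1 + chi r.1 * chi r.2.2 + chi r.2.1 * chi r.2.2) = 3 := by decide
  have c4 : (R27.sum fun r => chi r.1 * chi r.2.1 * chi r.2.2) = 1 := by decide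
  rw [c1, c2, c3, c4]
  ring

theorem cube3_ehrhart :
    ∀ t : ℕ, 0 < t →
      (cubeCount ![-1, 2, 2] ![2, -1, 2] ![2, 2, -1] t : ℤ) =
        (3 * t + 1) * (9 * t ^ 2 + 1) := by
  intro t ht
  set D : (Fin 3 → ℤ) → ℤ×ℤ×ℤ :=
    fun p => (-p 0 + 2*p 1 + 2*p 2, 2*p 0 - p 1 + 2*p 2, 2*p 0 + 2*p 1 - p 2) with hD
  have hinj : Function.Injective D := by
    intro p q h
    simp only [hD, Prod.mk.injEq] at h
    obtain ⟨h1, h2, h3⟩ := h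
    funext k
    fin_cases k
    · show p 0 = q 0; omega
    · show p 1 = q 1; omega
    · show p 2 = q 2; omega
  set S := {p : Fin 3 → ℤ | ∃ x y z : ℝ, x ∈ Set.Icc (0 : ℝ) t ∧ y ∈ Set.Icc (0 : ℝ) t ∧
    z ∈ Set.Icc (0 : ℝ) t ∧ ∀ k, (p k : ℝ) = x * (![-1, 2, 2] : Fin 3 → ℤ) k
      + y * (![2, -1, 2] : Fin 3 → ℤ) k + z * (![2, 2, -1] : Fin 3 → ℤ) k} with hS
  have himg : D '' S =
      ↑(((Finset.Icc (0:ℤ) (9*t)) ×ˢ (Finset.Icc (0:ℤ) (9*t)) ×ˢ (Finset.Icc (0:ℤ) (9*t))).filter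
        (fun x : ℤ×ℤ×ℤ => 9 ∣ (-x.1+2*x.2.1+2*x.2.2) ∧ 9 ∣ (2*x.1-x.2.1+2*x.2.2) ∧
          9 ∣ (2*x.1+2*x.2.1-x.2.2))) := by
    ext m
    simp only [Set.mem_image, Finset.coe_filter, Set.mem_setOf_eq, Finset.mem_product,
      Finset.mem_Icc]
    constructor
    · rintro ⟨p, ⟨x, y, z, ⟨hx0, hx1⟩, ⟨hy0, hy1⟩, ⟨hz0, hz1⟩, hk⟩, rfl⟩
      have e0 := hk 0
      have e1 := hk 1
      have e2 := hk 2
      simp only [show (![-1, 2, 2] : Fin 3 → ℤ) 0 = -1 from rfl,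
        show (![-1, 2, 2] : Fin 3 → ℤ) 1 = 2 from rfl,
        show (![-1, 2, 2] : Fin 3 → ℤ) 2 = 2 from rfl,
        show (![2, -1, 2] : Fin 3 → ℤ) 0 = 2 from rfl,
        show (![2, -1, 2] : Fin 3 → ℤ) 1 = -1 from rfl,
        show (![2, -1, 2] : Fin 3 → ℤ) 2 = 2 from rfl,
        show (![2, 2, -1] : Fin 3 → ℤ) 0 = 2 from rfl,
        show (![2, 2, -1] : Fin 3 → ℤ) 1 = 2 from rfl,
        show (![2, 2, -1] : Fin 3 → ℤ) 2 = -1 from rfl] at e0 e1 e2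
      push_cast at e0 e1 e2
      have ha : ((-p 0 + 2*p 1 + 2*p 2 : ℤ) : ℝ) = 9 * x := by push_cast; linarith
      have hb : ((2*p 0 - p 1 + 2*p 2 : ℤ) : ℝ) = 9 * y := by push_cast; linarith
      have hc : ((2*p 0 + 2*p 1 - p 2 : ℤ) : ℝ) = 9 * z := by push_cast; linarith
      refine ⟨⟨⟨?_, ?_⟩, ⟨?_, ?_⟩, ?_, ?_⟩, ⟨p 0, by ring⟩,
        ⟨p 1, by ring⟩, ⟨p 2, by ring⟩⟩
      · have : (0:ℝ) ≤ ((-p 0 + 2*p 1 + 2*p 2 : ℤ) : ℝ) := by rw [ha]; linarith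
        exact_mod_cast this
      · have : ((-p 0 + 2*p 1 + 2*p 2 : ℤ) : ℝ) ≤ 9*(t:ℝ) := by rw [ha]; linarith
        exact_mod_cast this
      · have : (0:ℝ) ≤ ((2*p 0 - p 1 + 2*p 2 : ℤ) : ℝ) := by rw [hb]; linarith
        exact_mod_cast this
      · have : ((2*p 0 - p 1 + 2*p 2 : ℤ) : ℝ) ≤ 9*(t:ℝ) := by rw [hb]; linarith
        exact_mod_cast this
      · have : (0:ℝ) ≤ ((2*p 0 + 2*p 1 - p 2 : ℤ) : ℝ) := by rw [hc]; linarith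
        exact_mod_cast this
      · have : ((2*p 0 + 2*p 1 - p 2 : ℤ) : ℝ) ≤ 9*(t:ℝ) := by rw [hc]; linarith
        exact_mod_cast this
    · rintro ⟨⟨⟨ha0, ha1⟩, ⟨hb0, hb1⟩, hc0, hc1⟩, ⟨u, hu⟩, ⟨v, hv⟩, ⟨w, hw⟩⟩
      refine ⟨![u, v, w], ⟨(m.1 : ℝ)/9, (m.2.1 : ℝ)/9, (m.2.2 : ℝ)/9,
        ⟨by positivity, ?_⟩, ⟨by positivity, ?_⟩, ⟨by positivity, ?_⟩, ?_⟩, ?_⟩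
      · rw [div_le_iff₀ (by norm_num)]
        calc ((m.1:ℤ):ℝ) ≤ ((9*(t:ℤ):ℤ):ℝ) := by exact_mod_cast ha1
        _ = (t:ℝ)*9 := by push_cast; ring
      · rw [div_le_iff₀ (by norm_num)]
        calc ((m.2.1:ℤ):ℝ) ≤ ((9*(t:ℤ):ℤ):ℝ) := by exact_mod_cast hb1
        _ = (t:ℝ)*9 := by push_cast; ring
      · rw [div_le_iff₀ (by norm_num)]
        calc ((m.2.2:ℤ):ℝ) ≤ ((9*(t:ℤ):ℤ):ℝ) := by exact_mod_cast hc1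
        _ = (t:ℝ)*9 := by push_cast; ring
      · intro k
        have hu' : -(m.1:ℝ) + 2*(m.2.1:ℝ) + 2*(m.2.2:ℝ) = 9 * (u:ℝ) := by exact_mod_cast congrArg (Int.cast : ℤ → ℝ) hu
        have hv' : 2*(m.1:ℝ) - (m.2.1:ℝ) + 2*(m.2.2:ℝ) = 9 * (v:ℝ) := by exact_mod_cast congrArg (Int.cast : ℤ → ℝ) hv
        have hw' : 2*(m.1:ℝ) + 2*(m.2.1:ℝ) - (m.2.2:ℝ) = 9 * (w:ℝ) := by exact_mod_cast congrArg (Int.cast : ℤ → ℝ) hw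
        fin_cases k <;>
          simp only [Matrix.cons_val_zero, Matrix.cons_val_one, Matrix.head_cons,
            Matrix.cons_val_two, Matrix.tail_cons, Fin.isValue] <;>
          push_cast <;> field_simp <;> linarith
      · have h0 : (![u, v, w] : Fin 3 → ℤ) 0 = u := rfl
        have h1 : (![u, v, w] : Fin 3 → ℤ) 1 = v := rfl
        have h2 : (![u, v, w] : Fin 3 → ℤ) 2 = w := rfl
        rw [hD]
        dsimp only
        rw [h0, h1, h2]
        ext <;> dsimp only <;> omega
  have hcount : cubeCount ![-1, 2, 2] ![2, -1, 2] ![2, 2, -1] t = 27*t^3 + 9*t^2 + 3*t + 1 := by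
    rw [cubeCount, ← hS, ← Set.ncard_image_of_injective S hinj, himg,
      Set.ncard_coe_finset, cardF]
  rw [hcount]
  push_cast
  ring
end

section
/- The cube with vertex at the origin and edge vectors (−2,6,3), (3,−2,6), (6,3,−2) has Ehrhart polynomial L(t) = (7t+1)(49t²−4t+1). -/
set_option maxRecDepth 10000

open Pointwise

noncomputable def Ufin (t : ℕ) (c : ℤ) : Finset ℤ :=
  (Finset.Icc (-7 : ℤ) (t + 7)).filter fun u => 0 ≤ c + 49 * u ∧ c + 49 * u ≤ 49 * t

lemma mem_Ufin {t : ℕ} {c u : ℤ} :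
    u ∈ Ufin t c ↔ (-7 ≤ u ∧ u ≤ t + 7) ∧ 0 ≤ c + 49 * u ∧ c + 49 * u ≤ 49 * t := by
  simp [Ufin, Finset.mem_filter, Finset.mem_Icc, and_assoc]

noncomputable def Dfin (t : ℕ) : Finset (ℤ × ℤ × ℤ × ℤ × ℤ) :=
  (Finset.Ico (0:ℤ) 49 ×ˢ Finset.Ico (0:ℤ) 7).biUnion fun xy =>
    {xy.1} ×ˢ {xy.2} ×ˢ Ufin t (-2*xy.1+7*xy.2) ×ˢ Ufin t (3*xy.1+7*xy.2) ×ˢ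
      Ufin t (6*xy.1+7*xy.2)

lemma mem_Dfin {t : ℕ} {z : ℤ × ℤ × ℤ × ℤ × ℤ} :
    z ∈ Dfin t ↔ (0 ≤ z.1 ∧ z.1 < 49) ∧ (0 ≤ z.2.1 ∧ z.2.1 < 7) ∧
      z.2.2.1 ∈ Ufin t (-2*z.1+7*z.2.1) ∧ z.2.2.2.1 ∈ Ufin t (3*z.1+7*z.2.1) ∧
      z.2.2.2.2 ∈ Ufin t (6*z.1+7*z.2.1) := by
  obtain ⟨a, b, u, v, w⟩ := z
  simp only [Dfin, Finset.mem_biUnion, Finset.mem_product, Finset.mem_Ico,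
    Finset.mem_singleton]
  constructor
  · rintro ⟨⟨x, y⟩, ⟨hx, hy⟩, rfl, rfl, h⟩
    exact ⟨hx, hy, h⟩
  · rintro ⟨hx, hy, h⟩
    exact ⟨⟨a, b⟩, ⟨hx, hy⟩, rfl, rfl, h⟩

def Phi (z : ℤ × ℤ × ℤ × ℤ × ℤ) : Fin 3 → ℤ :=
  ![z.1 + z.2.1 - 2*z.2.2.1 + 3*z.2.2.2.1 + 6*z.2.2.2.2,
    z.2.1 + 6*z.2.2.1 - 2*z.2.2.2.1 + 3*z.2.2.2.2,
    z.2.1 + 3*z.2.2.1 + 6*z.2.2.2.1 - 2*z.2.2.2.2]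

lemma Phi_injOn {t : ℕ} : Set.InjOn Phi (Dfin t) := by
  rintro ⟨a, b, u, v, w⟩ hz ⟨a', b', u', v', w'⟩ hz' h
  simp only [Finset.mem_coe, mem_Dfin, mem_Ufin] at hz hz'
  have h0 := congrFun h 0
  have h1 := congrFun h 1
  have h2 := congrFun h 2
  simp only [Phi, Matrix.cons_val_zero, Matrix.cons_val_one, Matrix.head_cons,
    Matrix.cons_val_two, Matrix.tail_cons] at h0 h1 h2
  obtain ⟨⟨ha0, ha1⟩, ⟨hb0, hb1⟩, -, -, -⟩ := hz
  obtain ⟨⟨ha0', ha1'⟩, ⟨hb0', hb1'⟩, -, -, -⟩ := hz'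
  simp only [Prod.mk.injEq]
  omega

lemma cube_set_eq {t : ℕ} (ht : 0 < t) :
    {p : Fin 3 → ℤ | ∃ x y z : ℝ, x ∈ Set.Icc (0 : ℝ) t ∧ y ∈ Set.Icc (0 : ℝ) t ∧
      z ∈ Set.Icc (0 : ℝ) t ∧ ∀ k, (p k : ℝ) = x * (![-2,6,3] : Fin 3 → ℤ) k
        + y * (![3,-2,6] : Fin 3 → ℤ) k + z * (![6,3,-2] : Fin 3 → ℤ) k}
    = ↑((Dfin t).image Phi) := by
  ext p
  simp only [Set.mem_setOf_eq, Finset.coe_image, Set.mem_image, Finset.mem_coe,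
    Set.mem_Icc]
  constructor
  · rintro ⟨X, Y, Z, ⟨hX0, hX1⟩, ⟨hY0, hY1⟩, ⟨hZ0, hZ1⟩, hp⟩
    have e0 := hp 0
    have e1 := hp 1
    have e2 := hp 2
    simp only [Matrix.cons_val_zero, Matrix.cons_val_one, Matrix.head_cons,
      Matrix.cons_val_two, Matrix.tail_cons] at e0 e1 e2
    push_cast at e0 e1 e2
    set q1 : ℤ := -2*p 0 + 6*p 1 + 3*p 2 with hq1d
    set q2 : ℤ := 3*p 0 - 2*p 1 + 6*p 2 with hq2d
    set q3 : ℤ := 6*p 0 + 3*p 1 - 2*p 2 with hq3d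
    have hq1r : (q1 : ℝ) = 49 * X := by rw [hq1d]; push_cast; linarith
    have hq2r : (q2 : ℝ) = 49 * Y := by rw [hq2d]; push_cast; linarith
    have hq3r : (q3 : ℝ) = 49 * Z := by rw [hq3d]; push_cast; linarith
    have hb1 : 0 ≤ q1 ∧ q1 ≤ 49 * (t : ℤ) := by
      constructor
      · exact_mod_cast (by rw [hq1r]; linarith : (0:ℝ) ≤ (q1:ℝ))
      · exact_mod_cast (by rw [hq1r]; push_cast; linarith : (q1:ℝ) ≤ ((49 * (t:ℤ) : ℤ) : ℝ))
    have hb2 : 0 ≤ q2 ∧ q2 ≤ 49 * (t : ℤ) := by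
      constructor
      · exact_mod_cast (by rw [hq2r]; linarith : (0:ℝ) ≤ (q2:ℝ))
      · exact_mod_cast (by rw [hq2r]; push_cast; linarith : (q2:ℝ) ≤ ((49 * (t:ℤ) : ℤ) : ℝ))
    have hb3 : 0 ≤ q3 ∧ q3 ≤ 49 * (t : ℤ) := by
      constructor
      · exact_mod_cast (by rw [hq3r]; linarith : (0:ℝ) ≤ (q3:ℝ))
      · exact_mod_cast (by rw [hq3r]; push_cast; linarith : (q3:ℝ) ≤ ((49 * (t:ℤ) : ℤ) : ℝ))
    set a : ℤ := (10*(q2-q1)) % 49 with had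
    have ha0 : 0 ≤ a ∧ a < 49 := by omega
    have hra : (49:ℤ) ∣ q2 - q1 - 5*a := by omega
    have hrb : (7:ℤ) ∣ q2 - 3*a := by omega
    have hrc : (49:ℤ) ∣ q3 - q2 - 3*a := by omega
    set b : ℤ := ((q2-3*a) % 49) / 7 with hbd
    have hb0 : 0 ≤ b ∧ b < 7 := by omega
    have h4 : (49:ℤ) ∣ q2 - (3*a + 7*b) := by omega
    have h3 : (49:ℤ) ∣ q1 - (-2*a + 7*b) := by omega
    have h5 : (49:ℤ) ∣ q3 - (6*a + 7*b) := by omega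
    set u1 : ℤ := (q1 - (-2*a + 7*b)) / 49 with hu1d
    set u2 : ℤ := (q2 - (3*a + 7*b)) / 49 with hu2d
    set u3 : ℤ := (q3 - (6*a + 7*b)) / 49 with hu3d
    have hu1 : -2*a + 7*b + 49*u1 = q1 := by omega
    have hu2 : 3*a + 7*b + 49*u2 = q2 := by omega
    have hu3 : 6*a + 7*b + 49*u3 = q3 := by omega
    refine ⟨(a, b, u1, u2, u3), ?_, ?_⟩
    · rw [mem_Dfin]
      simp only [mem_Ufin]
      refine ⟨⟨ha0.1, ha0.2⟩, ⟨hb0.1, hb0.2⟩, ?_, ?_, ?_⟩ <;> omega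
    · funext k
      fin_cases k <;> simp [Phi] <;> omega
  · rintro ⟨⟨a, b, u, v, w⟩, hz, rfl⟩
    rw [mem_Dfin] at hz
    simp only [mem_Ufin] at hz
    obtain ⟨⟨ha0, ha1⟩, ⟨hb0, hb1⟩, hu, hv, hw⟩ := hz
    have h49 : (0:ℝ) < 49 := by norm_num
    refine ⟨((-2*a+7*b+49*u : ℤ) : ℝ)/49, ((3*a+7*b+49*v : ℤ) : ℝ)/49,
      ((6*a+7*b+49*w : ℤ) : ℝ)/49, ⟨?_, ?_⟩, ⟨?_, ?_⟩, ⟨?_, ?_⟩, ?_⟩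
    · apply div_nonneg _ (le_of_lt h49)
      exact_mod_cast hu.2.1
    · rw [div_le_iff₀ h49]
      have : ((-2*a+7*b+49*u : ℤ) : ℝ) ≤ ((49 * (t:ℤ) : ℤ) : ℝ) := by exact_mod_cast hu.2.2
      push_cast at this ⊢
      linarith
    · apply div_nonneg _ (le_of_lt h49)
      exact_mod_cast hv.2.1
    · rw [div_le_iff₀ h49]
      have : ((3*a+7*b+49*v : ℤ) : ℝ) ≤ ((49 * (t:ℤ) : ℤ) : ℝ) := by exact_mod_cast hv.2.2
      push_cast at this ⊢
      linarith
    · apply div_nonneg _ (le_of_lt h49)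
      exact_mod_cast hw.2.1
    · rw [div_le_iff₀ h49]
      have : ((6*a+7*b+49*w : ℤ) : ℝ) ≤ ((49 * (t:ℤ) : ℤ) : ℝ) := by exact_mod_cast hw.2.2
      push_cast at this ⊢
      linarith
    · intro k
      fin_cases k <;>
        · simp only [Phi, Matrix.cons_val_zero, Matrix.cons_val_one, Matrix.head_cons,
            Matrix.cons_val_two, Matrix.tail_cons, Fin.isValue]
          push_cast
          field_simp
          ring

lemma card_Ufin {t : ℕ} (ht : 1 ≤ t) {c : ℤ} (h1 : -100 ≤ c) (h2 : c ≤ 340) :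
    (Ufin t c).card = if (49:ℤ) ∣ c then t + 1 else t := by
  by_cases hd : (49:ℤ) ∣ c
  · rw [if_pos hd]
    obtain ⟨m, rfl⟩ := hd
    have he : Ufin t (49 * m) = Finset.Icc (-m) (t - m) := by
      ext u; rw [mem_Ufin, Finset.mem_Icc]; omega
    rw [he, Int.card_Icc]; omega
  · rw [if_neg hd]
    have h0 : c % 49 ≠ 0 := by
      intro h; exact hd (Int.dvd_of_emod_eq_zero h)
    have he : Ufin t c = Finset.Icc (-(c / 49)) (t - 1 - c / 49) := by
      ext u; rw [mem_Ufin, Finset.mem_Icc]; omega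
    rw [he, Int.card_Icc]; omega

lemma card_Dfin {t : ℕ} (ht : 1 ≤ t) :
    (Dfin t).card = 343 * t^3 + 21 * t^2 + 3 * t + 1 := by
  have hdisj : ∀ x ∈ Finset.Ico (0:ℤ) 49 ×ˢ Finset.Ico (0:ℤ) 7,
      ∀ y ∈ Finset.Ico (0:ℤ) 49 ×ˢ Finset.Ico (0:ℤ) 7, x ≠ y →
      Disjoint
        ({x.1} ×ˢ {x.2} ×ˢ Ufin t (-2*x.1+7*x.2) ×ˢ Ufin t (3*x.1+7*x.2) ×ˢ Ufin t (6*x.1+7*x.2))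
        ({y.1} ×ˢ {y.2} ×ˢ Ufin t (-2*y.1+7*y.2) ×ˢ Ufin t (3*y.1+7*y.2) ×ˢ Ufin t (6*y.1+7*y.2)) := by
    intro x _ y _ hne
    rw [Finset.disjoint_left]
    intro z hz1 hz2
    simp only [Finset.mem_product, Finset.mem_singleton] at hz1 hz2
    exact hne (Prod.ext (hz1.1.symm.trans hz2.1) (hz1.2.1.symm.trans hz2.2.1))
  have hcards : ∀ xy ∈ Finset.Ico (0:ℤ) 49 ×ˢ Finset.Ico (0:ℤ) 7,
      ({xy.1} ×ˢ {xy.2} ×ˢ Ufin t (-2*xy.1+7*xy.2) ×ˢ Ufin t (3*xy.1+7*xy.2) ×ˢ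
        Ufin t (6*xy.1+7*xy.2)).card
      = t^3
        + ((if (49:ℤ) ∣ -2*xy.1+7*xy.2 then 1 else 0) + (if (49:ℤ) ∣ 3*xy.1+7*xy.2 then 1 else 0)
            + (if (49:ℤ) ∣ 6*xy.1+7*xy.2 then 1 else 0)) * t^2
        + ((if (49:ℤ) ∣ -2*xy.1+7*xy.2 then 1 else 0) * (if (49:ℤ) ∣ 3*xy.1+7*xy.2 then 1 else 0)
            + (if (49:ℤ) ∣ -2*xy.1+7*xy.2 then 1 else 0) * (if (49:ℤ) ∣ 6*xy.1+7*xy.2 then 1 else 0)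
            + (if (49:ℤ) ∣ 3*xy.1+7*xy.2 then 1 else 0) * (if (49:ℤ) ∣ 6*xy.1+7*xy.2 then 1 else 0)) * t
        + (if (49:ℤ) ∣ -2*xy.1+7*xy.2 then 1 else 0) * ((if (49:ℤ) ∣ 3*xy.1+7*xy.2 then 1 else 0)
            * (if (49:ℤ) ∣ 6*xy.1+7*xy.2 then 1 else 0)) := by
    intro xy hxy
    simp only [Finset.mem_product, Finset.mem_Ico] at hxy
    rw [Finset.card_product, Finset.card_product, Finset.card_product, Finset.card_product,
      Finset.card_singleton, Finset.card_singleton, card_Ufin ht (by omega) (by omega),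
      card_Ufin ht (by omega) (by omega), card_Ufin ht (by omega) (by omega)]
    split_ifs <;> ring
  rw [Dfin, Finset.card_biUnion hdisj, Finset.sum_congr rfl hcards]
  rw [Finset.sum_add_distrib, Finset.sum_add_distrib, Finset.sum_add_distrib,
    ← Finset.sum_mul, ← Finset.sum_mul, Finset.sum_const]
  have e0 : (Finset.Ico (0:ℤ) 49 ×ˢ Finset.Ico (0:ℤ) 7).card = 343 := by decide
  have e1 : ((Finset.Ico (0:ℤ) 49 ×ˢ Finset.Ico (0:ℤ) 7).sum fun xy =>
      ((if (49:ℤ) ∣ -2*xy.1+7*xy.2 then (1:ℕ) else 0) + (if (49:ℤ) ∣ 3*xy.1+7*xy.2 then 1 else 0)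
        + (if (49:ℤ) ∣ 6*xy.1+7*xy.2 then 1 else 0))) = 21 := by decide
  have e2 : ((Finset.Ico (0:ℤ) 49 ×ˢ Finset.Ico (0:ℤ) 7).sum fun xy =>
      ((if (49:ℤ) ∣ -2*xy.1+7*xy.2 then (1:ℕ) else 0) * (if (49:ℤ) ∣ 3*xy.1+7*xy.2 then 1 else 0)
        + (if (49:ℤ) ∣ -2*xy.1+7*xy.2 then 1 else 0) * (if (49:ℤ) ∣ 6*xy.1+7*xy.2 then 1 else 0)
        + (if (49:ℤ) ∣ 3*xy.1+7*xy.2 then 1 else 0) * (if (49:ℤ) ∣ 6*xy.1+7*xy.2 then 1 else 0))) = 3 := by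
    decide
  have e3 : ((Finset.Ico (0:ℤ) 49 ×ˢ Finset.Ico (0:ℤ) 7).sum fun xy =>
      (if (49:ℤ) ∣ -2*xy.1+7*xy.2 then (1:ℕ) else 0) * ((if (49:ℤ) ∣ 3*xy.1+7*xy.2 then 1 else 0)
        * (if (49:ℤ) ∣ 6*xy.1+7*xy.2 then 1 else 0))) = 1 := by decide
  rw [e0, e1, e2, e3]
  ring


theorem cube7_ehrhart :
    ∀ t : ℕ, 0 < t →
      (cubeCount ![-2, 6, 3] ![3, -2, 6] ![6, 3, -2] t : ℤ) =
        (7 * t + 1) * (49 * t ^ 2 - 4 * t + 1) := by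
  intro t ht
  have key : cubeCount ![-2, 6, 3] ![3, -2, 6] ![6, 3, -2] t
      = 343 * t^3 + 21 * t^2 + 3 * t + 1 := by
    unfold cubeCount
    rw [cube_set_eq ht, Set.ncard_coe_finset, Finset.card_image_of_injOn Phi_injOn,
      card_Dfin ht]
  rw [key]
  push_cast
  ring
end

section
/- The regular tetrahedron T₃ with vertices (0,0,0), (1,1,4), (1,4,1), (4,1,1) has Ehrhart polynomial L(T₃,t) = 9t³ + (9/2)t² + (13/2)t + 1. -/
open Pointwise

/- ### Auxiliary counting machinery -/

def ehrA (n : ℕ) : Finset (ℕ × ℕ) :=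
  (Finset.range (n+1) ×ˢ Finset.range (n+1)).filter (fun q => q.1 + q.2 ≤ n)

lemma card_ehrA (n : ℕ) : 2 * (ehrA n).card = (n+1)*(n+2) := by
  have h1 : ehrA n = (Finset.range (n+1)).biUnion
      (fun a => ({a} : Finset ℕ) ×ˢ Finset.range (n + 1 - a)) := by
    ext ⟨a, b⟩
    simp [ehrA]
    omega
  rw [h1, Finset.card_biUnion]
  · have h2 : ∀ a ∈ Finset.range (n+1),
        (({a} : Finset ℕ) ×ˢ Finset.range (n + 1 - a)).card = n + 1 - a := by
      intro a _
      simp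
    rw [Finset.sum_congr rfl h2]
    have h3 := Finset.sum_range_reflect (fun a => n + 1 - a) (n+1)
    rw [← h3]
    have h4 : ∀ j ∈ Finset.range (n+1), n + 1 - (n + 1 - 1 - j) = j + 1 := by
      intro j hj
      simp at hj
      omega
    rw [Finset.sum_congr rfl h4]
    have h6 : ∑ j ∈ Finset.range (n+1), (j+1) = ∑ j ∈ Finset.range (n+2), j := by
      rw [Finset.sum_range_succ' (fun j => j) (n+1)]
      simp
    rw [h6]
    have h5 := Finset.sum_range_id_mul_two (n+2)
    have h7 : n + 2 - 1 = n + 1 := rfl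
    rw [h7] at h5
    linarith
  · intro x hx y hy hxy
    simp [Finset.disjoint_left]
    intro a b ha _ hay
    omega

noncomputable def ehrTri (m s : ℤ) : Finset (ℤ × ℤ × ℤ) :=
  ((Finset.Icc m (s - 2*m)) ×ˢ (Finset.Icc m (s - 2*m)) ×ˢ (Finset.Icc m (s - 2*m))).filter
    (fun p => p.1 + p.2.1 + p.2.2 = s)

lemma mem_ehrTri {m s : ℤ} {p : ℤ × ℤ × ℤ} :
    p ∈ ehrTri m s ↔ m ≤ p.1 ∧ m ≤ p.2.1 ∧ m ≤ p.2.2 ∧ p.1 + p.2.1 + p.2.2 = s := by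
  obtain ⟨x, y, z⟩ := p
  simp [ehrTri, Finset.mem_Icc]
  omega

lemma card_ehrTri (m : ℤ) (n : ℕ) : 2 * (ehrTri m (3*m + n)).card = (n+1)*(n+2) := by
  rw [show (ehrTri m (3*m + n)).card = (ehrA n).card from ?_, card_ehrA]
  apply Finset.card_bij (fun p _ => ((p.1 - m).toNat, (p.2.1 - m).toNat))
  · rintro ⟨x, y, z⟩ hp
    rw [mem_ehrTri] at hp
    simp [ehrA] at hp ⊢
    omega
  · rintro ⟨x, y, z⟩ hp ⟨x', y', z'⟩ hp' h
    rw [mem_ehrTri] at hp hp'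
    simp at hp hp'
    simp [Prod.ext_iff] at h ⊢
    omega
  · rintro ⟨a, b⟩ hab
    simp [ehrA] at hab
    refine ⟨(m + a, m + b, m + (n - a - b : ℕ)), ?_, ?_⟩
    · rw [mem_ehrTri]
      dsimp only
      refine ⟨by omega, by omega, by omega, by omega⟩
    · simp [Prod.ext_iff]

noncomputable def ehrF (t : ℕ) : Finset (ℤ × ℤ × ℤ) :=
  ((Finset.Icc (0:ℤ) (6*t)) ×ˢ (Finset.Icc (0:ℤ) (6*t)) ×ˢ (Finset.Icc (0:ℤ) (6*t))).filter
    (fun p => p.1 + p.2.1 + p.2.2 ≤ 6*t ∧ p.2.1 + p.2.2 ≤ 5*p.1 ∧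
      p.1 + p.2.2 ≤ 5*p.2.1 ∧ p.1 + p.2.1 ≤ 5*p.2.2)

lemma mem_ehrF {t : ℕ} {p : ℤ × ℤ × ℤ} :
    p ∈ ehrF t ↔ p.1 + p.2.1 + p.2.2 ≤ 6*t ∧ p.2.1 + p.2.2 ≤ 5*p.1 ∧
      p.1 + p.2.2 ≤ 5*p.2.1 ∧ p.1 + p.2.1 ≤ 5*p.2.2 := by
  obtain ⟨x, y, z⟩ := p
  simp [ehrF, Finset.mem_Icc]
  omega

lemma card_ehrF_one : (ehrF 1).card = 21 := by decide

lemma ehrF_mono (k : ℕ) : ehrF (k+1) ⊆ ehrF (k+2) := by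
  intro p hp
  rw [mem_ehrF] at hp ⊢
  push_cast at hp ⊢
  omega

lemma ehr_shell_eq (k : ℕ) : ehrF (k+2) \ ehrF (k+1) =
    (Finset.Icc (1:ℤ) 6).biUnion (fun r => ehrTri ((k:ℤ)+2) (6*((k:ℤ)+1)+r)) := by
  ext ⟨x, y, z⟩
  simp only [Finset.mem_sdiff, mem_ehrF, mem_ehrTri, Finset.mem_biUnion, Finset.mem_Icc]
  push_cast
  constructor
  · rintro ⟨h2, h1⟩
    refine ⟨x + y + z - 6*((k:ℤ)+1), by omega, by omega⟩
  · rintro ⟨r, hr, h⟩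
    omega

lemma ehr_card_step (k : ℕ) : (ehrF (k+2)).card =
    (ehrF (k+1)).card +
      ∑ r ∈ Finset.Icc (1:ℤ) 6, (ehrTri ((k:ℤ)+2) (6*((k:ℤ)+1)+r)).card := by
  have h1 : (ehrF (k+2) \ ehrF (k+1)).card + (ehrF (k+1)).card = (ehrF (k+2)).card :=
    Finset.card_sdiff_add_card_eq_card (ehrF_mono k)
  rw [ehr_shell_eq, Finset.card_biUnion] at h1
  · omega
  · intro x _ y _ hxy
    simp only [Finset.disjoint_left, mem_ehrTri]
    rintro ⟨a, b, c⟩ hh1 hh2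
    dsimp at hh1 hh2
    omega

lemma ehr_main_count (k : ℕ) :
    2 * (ehrF (k+1)).card = 18*(k+1)^3 + 9*(k+1)^2 + 13*(k+1) + 2 := by
  induction k with
  | zero => rw [card_ehrF_one]; norm_num
  | succ k ih =>
    have h6 : Finset.Icc (1:ℤ) 6 = {1, 2, 3, 4, 5, 6} := by decide
    have key : ∀ r : ℕ, 1 ≤ r → r ≤ 6 →
        2 * (ehrTri ((k:ℤ)+2) (6*((k:ℤ)+1)+(r:ℤ))).card = (3*k+r+1)*(3*k+r+2) := by
      intro r h1 h2
      have h := card_ehrTri ((k:ℤ)+2) (3*k+r)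
      rw [show (3*((k:ℤ)+2) + ((3*k+r : ℕ):ℤ)) = 6*((k:ℤ)+1)+(r:ℤ) by push_cast; ring] at h
      exact h
    rw [ehr_card_step k, Nat.mul_add, h6]
    rw [Finset.sum_insert (by decide), Finset.sum_insert (by decide),
      Finset.sum_insert (by decide), Finset.sum_insert (by decide),
      Finset.sum_insert (by decide), Finset.sum_singleton]
    rw [ih]
    have k1 := key 1 (by norm_num) (by norm_num)
    have k2 := key 2 (by norm_num) (by norm_num)
    have k3 := key 3 (by norm_num) (by norm_num)
    have k4 := key 4 (by norm_num) (by norm_num)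
    have k5 := key 5 (by norm_num) (by norm_num)
    have k6 := key 6 (by norm_num) (by norm_num)
    push_cast at k1 k2 k3 k4 k5 k6
    ring_nf
    ring_nf at k1 k2 k3 k4 k5 k6
    omega

/- ### Hull characterization -/

lemma ehr_mem_hull_iff (t : ℕ) (ht : 0 < t) (x : Fin 3 → ℝ) :
    x ∈ (t:ℝ) • convexHull ℝ ({![0, 0, 0], ![1, 1, 4], ![1, 4, 1], ![4, 1, 1]} : Set (Fin 3 → ℝ)) ↔
      (x 0 + x 1 + x 2 ≤ 6*t ∧ x 1 + x 2 ≤ 5*x 0 ∧ x 0 + x 2 ≤ 5*x 1 ∧ x 0 + x 1 ≤ 5*x 2) := by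
  have ht' : (0:ℝ) < t := by exact_mod_cast ht
  constructor
  · rintro ⟨y, hy, rfl⟩
    have hface : ∀ (a b c d : ℝ),
        (0*a + 0*b + 0*c ≤ d) → (1*a + 1*b + 4*c ≤ d) → (1*a + 4*b + 1*c ≤ d) →
        (4*a + 1*b + 1*c ≤ d) →
        y 0 * a + y 1 * b + y 2 * c ≤ d := by
      intro a b c d h0 h1 h2 h3
      have hcv : Convex ℝ {w : Fin 3 → ℝ | w 0 * a + w 1 * b + w 2 * c ≤ d} := by
        apply convex_halfSpace_le
        constructor
        · intro u v; simp [Pi.add_apply]; ring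
        · intro r u; simp [Pi.smul_apply, smul_eq_mul]; ring
      exact convexHull_min
        (by rintro w (rfl | rfl | rfl | rfl) <;>
          simp [Matrix.cons_val_zero, Matrix.cons_val_one, Matrix.head_cons] <;> linarith)
        hcv hy
    have h6 := hface 1 1 1 6 (by norm_num) (by norm_num) (by norm_num) (by norm_num)
    have hA := hface (-5) 1 1 0 (by norm_num) (by norm_num) (by norm_num) (by norm_num)
    have hB := hface 1 (-5) 1 0 (by norm_num) (by norm_num) (by norm_num) (by norm_num)
    have hC := hface 1 1 (-5) 0 (by norm_num) (by norm_num) (by norm_num) (by norm_num)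
    simp only [Pi.smul_apply, smul_eq_mul]
    refine ⟨?_, ?_, ?_, ?_⟩ <;>
      nlinarith [mul_le_mul_of_nonneg_left h6 ht'.le, mul_le_mul_of_nonneg_left hA ht'.le,
        mul_le_mul_of_nonneg_left hB ht'.le, mul_le_mul_of_nonneg_left hC ht'.le]
  · rintro ⟨h1, h2, h3, h4⟩
    set y : Fin 3 → ℝ := fun i => x i / t with hy
    have hxy : x = (t:ℝ) • y := by
      funext i
      simp [hy, Pi.smul_apply, smul_eq_mul]
      field_simp
    refine ⟨y, ?_, hxy.symm⟩
    have hsum : y 0 + y 1 + y 2 ≤ 6 := by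
      rw [hy]
      rw [← add_div, ← add_div, div_le_iff₀ ht']
      linarith
    have ha : 0 ≤ 5 * y 0 - y 1 - y 2 := by
      have : 5 * y 0 - y 1 - y 2 = (5 * x 0 - x 1 - x 2) / t := by rw [hy]; ring
      rw [this]
      apply div_nonneg (by linarith) ht'.le
    have hb : 0 ≤ 5 * y 1 - y 0 - y 2 := by
      have : 5 * y 1 - y 0 - y 2 = (5 * x 1 - x 0 - x 2) / t := by rw [hy]; ring
      rw [this]
      apply div_nonneg (by linarith) ht'.le
    have hc : 0 ≤ 5 * y 2 - y 0 - y 1 := by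
      have : 5 * y 2 - y 0 - y 1 = (5 * x 2 - x 0 - x 1) / t := by rw [hy]; ring
      rw [this]
      apply div_nonneg (by linarith) ht'.le
    set w : Fin 4 → ℝ := ![1 - (y 0 + y 1 + y 2)/6, (5*y 2 - y 0 - y 1)/18,
      (5*y 1 - y 0 - y 2)/18, (5*y 0 - y 1 - y 2)/18] with hw
    set z : Fin 4 → (Fin 3 → ℝ) := ![![0,0,0], ![1,1,4], ![1,4,1], ![4,1,1]] with hz
    have hmem : ∑ i, w i • z i ∈ convexHull ℝ
        ({![0, 0, 0], ![1, 1, 4], ![1, 4, 1], ![4, 1, 1]} : Set (Fin 3 → ℝ)) := by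
      apply (convex_convexHull ℝ _).sum_mem
      · intro i _
        fin_cases i <;>
          simp [hw, Matrix.cons_val_zero, Matrix.cons_val_one, Matrix.head_cons] <;> linarith
      · rw [Fin.sum_univ_four]
        simp [hw, Matrix.cons_val_zero, Matrix.cons_val_one, Matrix.head_cons]
        ring
      · intro i _
        apply subset_convexHull
        fin_cases i <;> simp [hz]
    have hyeq : y = ∑ i, w i • z i := by
      funext j
      rw [Fin.sum_univ_four]
      fin_cases j <;>
        simp [hw, hz, Pi.smul_apply, smul_eq_mul, Matrix.cons_val_zero, Matrix.cons_val_one,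
          Matrix.head_cons] <;> ring
    rw [hyeq]
    exact hmem

/-- Number of lattice points of ℤ³ in the dilate `t • P` of the polytope
`P = convexHull ℝ V`. -/
noncomputable def hullCount (V : Set (Fin 3 → ℝ)) (t : ℕ) : ℕ :=
  Set.ncard {p : Fin 3 → ℤ | (fun i => (p i : ℝ)) ∈ (t : ℝ) • convexHull ℝ V}

theorem tetrahedron_T3_ehrhart :
    ∀ t : ℕ, 0 < t →
      (hullCount {![0, 0, 0], ![1, 1, 4], ![1, 4, 1], ![4, 1, 1]} t : ℚ) =
        9 * (t : ℚ) ^ 3 + 9 / 2 * t ^ 2 + 13 / 2 * t + 1 := by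
  intro t ht
  have hinj : Function.Injective (fun q : ℤ × ℤ × ℤ => (![q.1, q.2.1, q.2.2] : Fin 3 → ℤ)) := by
    intro a b h
    have h0 := congrFun h 0
    have h1 := congrFun h 1
    have h2 := congrFun h 2
    simp [Matrix.cons_val_zero, Matrix.cons_val_one, Matrix.head_cons] at h0 h1 h2
    exact Prod.ext h0 (Prod.ext h1 h2)
  have hset : {p : Fin 3 → ℤ | (fun i => (p i : ℝ)) ∈ (t : ℝ) • convexHull ℝ
      ({![0, 0, 0], ![1, 1, 4], ![1, 4, 1], ![4, 1, 1]} : Set (Fin 3 → ℝ))} =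
      ↑((ehrF t).image (fun q => (![q.1, q.2.1, q.2.2] : Fin 3 → ℤ))) := by
    ext p
    simp only [Set.mem_setOf_eq, ehr_mem_hull_iff t ht, Finset.coe_image, Set.mem_image,
      Finset.mem_coe, mem_ehrF]
    constructor
    · rintro ⟨e1, e2, e3, e4⟩
      refine ⟨(p 0, p 1, p 2), ⟨?_, ?_, ?_, ?_⟩, ?_⟩
      · exact_mod_cast e1
      · exact_mod_cast e2
      · exact_mod_cast e3
      · exact_mod_cast e4
      · funext i
        fin_cases i <;> simp
    · rintro ⟨q, ⟨e1, e2, e3, e4⟩, rfl⟩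
      refine ⟨?_, ?_, ?_, ?_⟩ <;>
        simp [Matrix.cons_val_zero, Matrix.cons_val_one, Matrix.head_cons] <;>
        push_cast <;> [exact_mod_cast e1; exact_mod_cast e2; exact_mod_cast e3; exact_mod_cast e4]
  rw [hullCount, hset, Set.ncard_coe_finset, Finset.card_image_of_injective _ hinj]
  obtain ⟨k, rfl⟩ := Nat.exists_eq_succ_of_ne_zero ht.ne'
  have h := ehr_main_count k
  have h2 : (2:ℚ) * ((ehrF (k+1)).card : ℚ) =
      18*((k:ℚ)+1)^3 + 9*((k:ℚ)+1)^2 + 13*((k:ℚ)+1) + 2 := by exact_mod_cast h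
  push_cast
  linarith
end

section
/- The regular octahedron O₃ with vertices ±(−1,2,2), ±(2,−1,2), ±(2,2,−1) has Ehrhart polynomial L(O₃,t) = 36t³ + 9t² − t + 1. -/
open Pointwise

section Aux

/-- triangle finset: pairs (a,b) with 0 ≤ a, 0 ≤ b, a+b ≤ M -/
noncomputable def triF (M : ℤ) : Finset (ℤ × ℤ) :=
  (Finset.Icc 0 M ×ˢ Finset.Icc 0 M).filter fun p => p.1 + p.2 ≤ M

lemma mem_triF {M : ℤ} {p : ℤ × ℤ} :
    p ∈ triF M ↔ 0 ≤ p.1 ∧ 0 ≤ p.2 ∧ p.1 + p.2 ≤ M := by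
  simp only [triF, Finset.mem_filter, Finset.mem_product, Finset.mem_Icc]
  omega

lemma triF_succ (M : ℤ) (h : -2 ≤ M) :
    (triF (M+1)).card = (triF M).card + (M+2).toNat := by
  have hinj : Function.Injective (fun a : ℤ => (a, M+1-a)) := by
    intro a b hab
    simpa using congrArg Prod.fst hab
  have hsplit : triF (M+1) = triF M ∪ (Finset.Icc (0:ℤ) (M+1)).image
      (fun a => (a, M+1-a)) := by
    ext p
    simp only [mem_triF, Finset.mem_union, Finset.mem_image, Finset.mem_Icc]
    constructor
    · rintro ⟨h1, h2, h3⟩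
      rcases le_or_gt (p.1 + p.2) M with h4 | h4
      · exact Or.inl ⟨h1, h2, h4⟩
      · refine Or.inr ⟨p.1, by omega, ?_⟩
        have : p.2 = M + 1 - p.1 := by omega
        rw [show (p.1, M+1-p.1) = p from by rw [← this]]
    · rintro (⟨h1, h2, h3⟩ | ⟨a, ha, rfl⟩)
      · exact ⟨h1, h2, by omega⟩
      · exact ⟨ha.1, by omega, by omega⟩
  have hdisj : Disjoint (triF M)
      ((Finset.Icc (0:ℤ) (M+1)).image (fun a => (a, M+1-a))) := by
    rw [Finset.disjoint_right]
    rintro p hp hq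
    simp only [Finset.mem_image, Finset.mem_Icc] at hp
    rw [mem_triF] at hq
    obtain ⟨a, ha, rfl⟩ := hp
    simp only at hq
    omega
  rw [hsplit, Finset.card_union_of_disjoint hdisj,
    Finset.card_image_of_injective _ hinj, Int.card_Icc]
  congr 1
  omega

lemma triF_card (M : ℤ) (h : -2 ≤ M) :
    2 * ((triF M).card : ℤ) = (M+1) * (M+2) := by
  obtain ⟨k, hk⟩ : ∃ k : ℕ, M = (k : ℤ) - 2 := ⟨(M+2).toNat, by omega⟩
  subst hk
  induction k with
  | zero =>
    have : triF ((0:ℕ) - 2 : ℤ) = ∅ := by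
      ext p; rw [mem_triF]; simp; omega
    rw [this]; norm_num
  | succ k ih =>
    have hk2 : -2 ≤ (k:ℤ) - 2 := by omega
    have h1 : ((k+1:ℕ):ℤ) - 2 = ((k:ℤ) - 2) + 1 := by push_cast; ring
    rw [h1, triF_succ _ hk2]
    have h2 : ((((k:ℤ) - 2) + 2).toNat : ℤ) = (k:ℤ) := by omega
    push_cast
    rw [h2]
    have := ih hk2
    nlinarith [this]



noncomputable def box (n : ℤ) : Finset (ℤ × ℤ × ℤ) :=
  Finset.Icc (-9*n) (9*n) ×ˢ (Finset.Icc (-9*n) (9*n) ×ˢ Finset.Icc (-9*n) (9*n))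

def sPred (a b₁ b₂ b₃ : ℤ) (p : ℤ × ℤ × ℤ) : Prop :=
  p.1 + p.2.1 + p.2.2 ≤ a ∧ p.1 + p.2.1 + p.2.2 - b₁ ≤ 6 * p.1 ∧
    p.1 + p.2.1 + p.2.2 - b₂ ≤ 6 * p.2.1 ∧ p.1 + p.2.1 + p.2.2 - b₃ ≤ 6 * p.2.2

instance (a b₁ b₂ b₃ : ℤ) : DecidablePred (sPred a b₁ b₂ b₃) := by
  intro p; unfold sPred; infer_instance

noncomputable def simpF (n a b₁ b₂ b₃ : ℤ) : Finset (ℤ × ℤ × ℤ) :=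
  (box n).filter (sPred a b₁ b₂ b₃)

/-- slice parameter: number of points in slice s is triangle of this size -/
def Msl (b₁ b₂ b₃ s : ℤ) : ℤ :=
  s - (s - b₁ + 5)/6 - (s - b₂ + 5)/6 - (s - b₃ + 5)/6

lemma mem_box {n : ℤ} {p : ℤ × ℤ × ℤ} :
    p ∈ box n ↔ -9*n ≤ p.1 ∧ p.1 ≤ 9*n ∧ -9*n ≤ p.2.1 ∧ p.2.1 ≤ 9*n ∧
      -9*n ≤ p.2.2 ∧ p.2.2 ≤ 9*n := by
  simp only [box, Finset.mem_product, Finset.mem_Icc]; tauto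

lemma card_simplex (n a b₁ b₂ b₃ smin : ℤ) (N : ℕ) (hN : (N : ℤ) = a - smin + 1)
    (hs : ∀ p : ℤ × ℤ × ℤ, sPred a b₁ b₂ b₃ p → smin ≤ p.1 + p.2.1 + p.2.2)
    (hbox : ∀ p : ℤ × ℤ × ℤ, sPred a b₁ b₂ b₃ p → p ∈ box n) :
    (simpF n a b₁ b₂ b₃).card
      = ∑ j ∈ Finset.range N, (triF (Msl b₁ b₂ b₃ (smin + j))).card := by
  have hmap : ∀ p ∈ simpF n a b₁ b₂ b₃,
      (p.1 + p.2.1 + p.2.2 - smin).toNat ∈ Finset.range N := by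
    intro p hp
    rw [simpF, Finset.mem_filter] at hp
    have h1 := hs p hp.2
    have h2 := hp.2.1
    simp only [Finset.mem_range]
    omega
  rw [Finset.card_eq_sum_card_fiberwise hmap]
  refine Finset.sum_congr rfl fun j hj => ?_
  simp only [Finset.mem_range] at hj
  set s : ℤ := smin + j with hs_def
  set L₁ : ℤ := (s - b₁ + 5)/6 with hL₁
  set L₂ : ℤ := (s - b₂ + 5)/6 with hL₂
  set L₃ : ℤ := (s - b₃ + 5)/6 with hL₃
  have hdiv₁ : s - b₁ ≤ 6 * L₁ ∧ 6 * L₁ ≤ s - b₁ + 5 := by rw [hL₁]; omega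
  have hdiv₂ : s - b₂ ≤ 6 * L₂ ∧ 6 * L₂ ≤ s - b₂ + 5 := by rw [hL₂]; omega
  have hdiv₃ : s - b₃ ≤ 6 * L₃ ∧ 6 * L₃ ≤ s - b₃ + 5 := by rw [hL₃]; omega
  have hM : Msl b₁ b₂ b₃ s = s - L₁ - L₂ - L₃ := by
    rw [Msl, hL₁, hL₂, hL₃]
  apply Finset.card_bij' (fun p _ => (p.1 - L₁, p.2.1 - L₂))
    (fun q _ => (L₁ + q.1, L₂ + q.2, s - (L₁ + q.1) - (L₂ + q.2)))
  · -- forward membership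
    intro p hp
    simp only [Finset.mem_filter, simpF] at hp
    obtain ⟨⟨_, hpred⟩, hfib⟩ := hp
    obtain ⟨h1, h2, h3, h4⟩ := hpred
    have hsum : p.1 + p.2.1 + p.2.2 = s := by
      have := hs p ⟨h1, h2, h3, h4⟩
      omega
    rw [mem_triF, hM]
    constructor
    · omega
    constructor
    · omega
    · omega
  · -- backward membership
    intro q hq
    rw [mem_triF, hM] at hq
    have hpred : sPred a b₁ b₂ b₃ (L₁ + q.1, L₂ + q.2, s - (L₁ + q.1) - (L₂ + q.2)) := by
      unfold sPred
      simp only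
      refine ⟨by omega, by omega, by omega, by omega⟩
    simp only [Finset.mem_filter, simpF]
    refine ⟨⟨hbox _ hpred, hpred⟩, ?_⟩
    omega
  · -- left inverse
    intro p hp
    simp only [Finset.mem_filter, simpF] at hp
    obtain ⟨⟨_, hpred⟩, hfib⟩ := hp
    have hsum : p.1 + p.2.1 + p.2.2 = s := by
      have := hs p hpred
      omega
    ext <;> simp <;> omega
  · -- right inverse
    intro q hq
    simp





def MT (j : ℕ) : ℤ := (j:ℤ) - 3*(((j:ℤ)+5)/6)

def MX (j : ℕ) : ℤ := 1+(j:ℤ) - ((j:ℤ)+7)/6 - 2*(((j:ℤ)+6)/6)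

lemma sumT (t : ℕ) :
    2 * ∑ j ∈ Finset.range (12*t+1), ((triF (MT j)).card : ℤ) = 144*(t:ℤ)^3+36*(t:ℤ)^2+26*(t:ℤ)+2 := by
  induction t with
  | zero => decide
  | succ t ih =>
    rw [show 12*(t+1)+1 = (12*t+1)+12 by ring]
    rw [show (12*t+1)+12 = (12*t+1+11)+1 by omega, Finset.sum_range_succ]
    rw [show (12*t+1)+11 = (12*t+1+10)+1 by omega, Finset.sum_range_succ]
    rw [show (12*t+1)+10 = (12*t+1+9)+1 by omega, Finset.sum_range_succ]
    rw [show (12*t+1)+9 = (12*t+1+8)+1 by omega, Finset.sum_range_succ]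
    rw [show (12*t+1)+8 = (12*t+1+7)+1 by omega, Finset.sum_range_succ]
    rw [show (12*t+1)+7 = (12*t+1+6)+1 by omega, Finset.sum_range_succ]
    rw [show (12*t+1)+6 = (12*t+1+5)+1 by omega, Finset.sum_range_succ]
    rw [show (12*t+1)+5 = (12*t+1+4)+1 by omega, Finset.sum_range_succ]
    rw [show (12*t+1)+4 = (12*t+1+3)+1 by omega, Finset.sum_range_succ]
    rw [show (12*t+1)+3 = (12*t+1+2)+1 by omega, Finset.sum_range_succ]
    rw [show (12*t+1)+2 = (12*t+1+1)+1 by omega, Finset.sum_range_succ]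
    rw [show (12*t+1)+1 = (12*t+1)+1 by omega, Finset.sum_range_succ]
    have e0 : 2*(((triF (MT (12*t+1))).card : ℤ)) = (6*(t:ℤ)+-2+1)*(6*(t:ℤ)+-2+2) := by
      have hM : MT (12*t+1) = 6*(t:ℤ)+-2 := by
        unfold MT; push_cast; omega
      rw [hM]; exact triF_card _ (by omega)
    have e1 : 2*(((triF (MT (12*t+1+1))).card : ℤ)) = (6*(t:ℤ)+-1+1)*(6*(t:ℤ)+-1+2) := by
      have hM : MT (12*t+1+1) = 6*(t:ℤ)+-1 := by
        unfold MT; push_cast; omega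
      rw [hM]; exact triF_card _ (by omega)
    have e2 : 2*(((triF (MT (12*t+1+2))).card : ℤ)) = (6*(t:ℤ)+0+1)*(6*(t:ℤ)+0+2) := by
      have hM : MT (12*t+1+2) = 6*(t:ℤ)+0 := by
        unfold MT; push_cast; omega
      rw [hM]; exact triF_card _ (by omega)
    have e3 : 2*(((triF (MT (12*t+1+3))).card : ℤ)) = (6*(t:ℤ)+1+1)*(6*(t:ℤ)+1+2) := by
      have hM : MT (12*t+1+3) = 6*(t:ℤ)+1 := by
        unfold MT; push_cast; omega
      rw [hM]; exact triF_card _ (by omega)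
    have e4 : 2*(((triF (MT (12*t+1+4))).card : ℤ)) = (6*(t:ℤ)+2+1)*(6*(t:ℤ)+2+2) := by
      have hM : MT (12*t+1+4) = 6*(t:ℤ)+2 := by
        unfold MT; push_cast; omega
      rw [hM]; exact triF_card _ (by omega)
    have e5 : 2*(((triF (MT (12*t+1+5))).card : ℤ)) = (6*(t:ℤ)+3+1)*(6*(t:ℤ)+3+2) := by
      have hM : MT (12*t+1+5) = 6*(t:ℤ)+3 := by
        unfold MT; push_cast; omega
      rw [hM]; exact triF_card _ (by omega)
    have e6 : 2*(((triF (MT (12*t+1+6))).card : ℤ)) = (6*(t:ℤ)+1+1)*(6*(t:ℤ)+1+2) := by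
      have hM : MT (12*t+1+6) = 6*(t:ℤ)+1 := by
        unfold MT; push_cast; omega
      rw [hM]; exact triF_card _ (by omega)
    have e7 : 2*(((triF (MT (12*t+1+7))).card : ℤ)) = (6*(t:ℤ)+2+1)*(6*(t:ℤ)+2+2) := by
      have hM : MT (12*t+1+7) = 6*(t:ℤ)+2 := by
        unfold MT; push_cast; omega
      rw [hM]; exact triF_card _ (by omega)
    have e8 : 2*(((triF (MT (12*t+1+8))).card : ℤ)) = (6*(t:ℤ)+3+1)*(6*(t:ℤ)+3+2) := by
      have hM : MT (12*t+1+8) = 6*(t:ℤ)+3 := by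
        unfold MT; push_cast; omega
      rw [hM]; exact triF_card _ (by omega)
    have e9 : 2*(((triF (MT (12*t+1+9))).card : ℤ)) = (6*(t:ℤ)+4+1)*(6*(t:ℤ)+4+2) := by
      have hM : MT (12*t+1+9) = 6*(t:ℤ)+4 := by
        unfold MT; push_cast; omega
      rw [hM]; exact triF_card _ (by omega)
    have e10 : 2*(((triF (MT (12*t+1+10))).card : ℤ)) = (6*(t:ℤ)+5+1)*(6*(t:ℤ)+5+2) := by
      have hM : MT (12*t+1+10) = 6*(t:ℤ)+5 := by
        unfold MT; push_cast; omega
      rw [hM]; exact triF_card _ (by omega)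
    have e11 : 2*(((triF (MT (12*t+1+11))).card : ℤ)) = (6*(t:ℤ)+6+1)*(6*(t:ℤ)+6+2) := by
      have hM : MT (12*t+1+11) = 6*(t:ℤ)+6 := by
        unfold MT; push_cast; omega
      rw [hM]; exact triF_card _ (by omega)
    push_cast at ih ⊢
    linear_combination ih + e0 + e1 + e2 + e3 + e4 + e5 + e6 + e7 + e8 + e9 + e10 + e11

lemma sumC0 (t : ℕ) :
    2 * ∑ j ∈ Finset.range (6*t), ((triF (MT j)).card : ℤ) = 18*(t:ℤ)^3+4*(t:ℤ) := by
  induction t with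
  | zero => decide
  | succ t ih =>
    rw [show 6*(t+1) = (6*t)+6 by ring]
    rw [show (6*t)+6 = (6*t+5)+1 by omega, Finset.sum_range_succ]
    rw [show (6*t)+5 = (6*t+4)+1 by omega, Finset.sum_range_succ]
    rw [show (6*t)+4 = (6*t+3)+1 by omega, Finset.sum_range_succ]
    rw [show (6*t)+3 = (6*t+2)+1 by omega, Finset.sum_range_succ]
    rw [show (6*t)+2 = (6*t+1)+1 by omega, Finset.sum_range_succ]
    rw [show (6*t)+1 = (6*t)+1 by omega, Finset.sum_range_succ]
    have e0 : 2*(((triF (MT (6*t))).card : ℤ)) = (3*(t:ℤ)+0+1)*(3*(t:ℤ)+0+2) := by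
      have hM : MT (6*t) = 3*(t:ℤ)+0 := by
        unfold MT; push_cast; omega
      rw [hM]; exact triF_card _ (by omega)
    have e1 : 2*(((triF (MT (6*t+1))).card : ℤ)) = (3*(t:ℤ)+-2+1)*(3*(t:ℤ)+-2+2) := by
      have hM : MT (6*t+1) = 3*(t:ℤ)+-2 := by
        unfold MT; push_cast; omega
      rw [hM]; exact triF_card _ (by omega)
    have e2 : 2*(((triF (MT (6*t+2))).card : ℤ)) = (3*(t:ℤ)+-1+1)*(3*(t:ℤ)+-1+2) := by
      have hM : MT (6*t+2) = 3*(t:ℤ)+-1 := by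
        unfold MT; push_cast; omega
      rw [hM]; exact triF_card _ (by omega)
    have e3 : 2*(((triF (MT (6*t+3))).card : ℤ)) = (3*(t:ℤ)+0+1)*(3*(t:ℤ)+0+2) := by
      have hM : MT (6*t+3) = 3*(t:ℤ)+0 := by
        unfold MT; push_cast; omega
      rw [hM]; exact triF_card _ (by omega)
    have e4 : 2*(((triF (MT (6*t+4))).card : ℤ)) = (3*(t:ℤ)+1+1)*(3*(t:ℤ)+1+2) := by
      have hM : MT (6*t+4) = 3*(t:ℤ)+1 := by
        unfold MT; push_cast; omega
      rw [hM]; exact triF_card _ (by omega)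
    have e5 : 2*(((triF (MT (6*t+5))).card : ℤ)) = (3*(t:ℤ)+2+1)*(3*(t:ℤ)+2+2) := by
      have hM : MT (6*t+5) = 3*(t:ℤ)+2 := by
        unfold MT; push_cast; omega
      rw [hM]; exact triF_card _ (by omega)
    push_cast at ih ⊢
    linear_combination ih + e0 + e1 + e2 + e3 + e4 + e5

lemma sumCX (t : ℕ) :
    2 * ∑ j ∈ Finset.range (6*t), ((triF (MX j)).card : ℤ) = 18*(t:ℤ)^3+6*(t:ℤ)^2+8*(t:ℤ) := by
  induction t with
  | zero => decide
  | succ t ih =>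
    rw [show 6*(t+1) = (6*t)+6 by ring]
    rw [show (6*t)+6 = (6*t+5)+1 by omega, Finset.sum_range_succ]
    rw [show (6*t)+5 = (6*t+4)+1 by omega, Finset.sum_range_succ]
    rw [show (6*t)+4 = (6*t+3)+1 by omega, Finset.sum_range_succ]
    rw [show (6*t)+3 = (6*t+2)+1 by omega, Finset.sum_range_succ]
    rw [show (6*t)+2 = (6*t+1)+1 by omega, Finset.sum_range_succ]
    rw [show (6*t)+1 = (6*t)+1 by omega, Finset.sum_range_succ]
    have e0 : 2*(((triF (MX (6*t))).card : ℤ)) = (3*(t:ℤ)+-2+1)*(3*(t:ℤ)+-2+2) := by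
      have hM : MX (6*t) = 3*(t:ℤ)+-2 := by
        unfold MX; push_cast; omega
      rw [hM]; exact triF_card _ (by omega)
    have e1 : 2*(((triF (MX (6*t+1))).card : ℤ)) = (3*(t:ℤ)+-1+1)*(3*(t:ℤ)+-1+2) := by
      have hM : MX (6*t+1) = 3*(t:ℤ)+-1 := by
        unfold MX; push_cast; omega
      rw [hM]; exact triF_card _ (by omega)
    have e2 : 2*(((triF (MX (6*t+2))).card : ℤ)) = (3*(t:ℤ)+0+1)*(3*(t:ℤ)+0+2) := by
      have hM : MX (6*t+2) = 3*(t:ℤ)+0 := by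
        unfold MX; push_cast; omega
      rw [hM]; exact triF_card _ (by omega)
    have e3 : 2*(((triF (MX (6*t+3))).card : ℤ)) = (3*(t:ℤ)+1+1)*(3*(t:ℤ)+1+2) := by
      have hM : MX (6*t+3) = 3*(t:ℤ)+1 := by
        unfold MX; push_cast; omega
      rw [hM]; exact triF_card _ (by omega)
    have e4 : 2*(((triF (MX (6*t+4))).card : ℤ)) = (3*(t:ℤ)+2+1)*(3*(t:ℤ)+2+2) := by
      have hM : MX (6*t+4) = 3*(t:ℤ)+2 := by
        unfold MX; push_cast; omega
      rw [hM]; exact triF_card _ (by omega)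
    have e5 : 2*(((triF (MX (6*t+5))).card : ℤ)) = (3*(t:ℤ)+2+1)*(3*(t:ℤ)+2+2) := by
      have hM : MX (6*t+5) = 3*(t:ℤ)+2 := by
        unfold MX; push_cast; omega
      rw [hM]; exact triF_card _ (by omega)
    push_cast at ih ⊢
    linear_combination ih + e0 + e1 + e2 + e3 + e4 + e5



section Inst
variable (t : ℕ)

lemma cardT : 2 * ((simpF (t:ℤ) (3*t) (9*t) (9*t) (9*t)).card : ℤ)
    = 144*(t:ℤ)^3+36*(t:ℤ)^2+26*(t:ℤ)+2 := by
  rw [card_simplex (t:ℤ) (3*t) (9*t) (9*t) (9*t) (-9*(t:ℤ)) (12*t+1)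
    (by push_cast; ring)
    (fun p hp => by unfold sPred at hp; omega)
    (fun p hp => by unfold sPred at hp; rw [mem_box]; omega)]
  rw [← sumT t]
  congr 1
  push_cast
  refine Finset.sum_congr rfl fun j hj => ?_
  have h : Msl (9*(t:ℤ)) (9*(t:ℤ)) (9*(t:ℤ)) (-9*(t:ℤ) + (j:ℤ)) = MT j := by
    unfold Msl MT; omega
  push_cast at h ⊢
  rw [h]

lemma cardC0 : 2 * ((simpF (t:ℤ) (-3*t-1) (9*t) (9*t) (9*t)).card : ℤ)
    = 18*(t:ℤ)^3+4*(t:ℤ) := by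
  rw [card_simplex (t:ℤ) (-3*t-1) (9*t) (9*t) (9*t) (-9*(t:ℤ)) (6*t)
    (by push_cast; ring)
    (fun p hp => by unfold sPred at hp; omega)
    (fun p hp => by unfold sPred at hp; rw [mem_box]; omega)]
  rw [← sumC0 t]
  congr 1
  push_cast
  refine Finset.sum_congr rfl fun j hj => ?_
  have h : Msl (9*(t:ℤ)) (9*(t:ℤ)) (9*(t:ℤ)) (-9*(t:ℤ) + (j:ℤ)) = MT j := by
    unfold Msl MT; omega
  push_cast at h ⊢
  rw [h]

lemma cardCX : 2 * ((simpF (t:ℤ) (3*t) (-9*t-1) (9*t) (9*t)).card : ℤ)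
    = 18*(t:ℤ)^3+6*(t:ℤ)^2+8*(t:ℤ) := by
  rw [card_simplex (t:ℤ) (3*t) (-9*t-1) (9*t) (9*t) (-3*(t:ℤ)+1) (6*t)
    (by push_cast; ring)
    (fun p hp => by unfold sPred at hp; omega)
    (fun p hp => by unfold sPred at hp; rw [mem_box]; omega)]
  rw [← sumCX t]
  congr 1
  push_cast
  refine Finset.sum_congr rfl fun j hj => ?_
  have h : Msl (-9*(t:ℤ)-1) (9*(t:ℤ)) (9*(t:ℤ)) (-3*(t:ℤ)+1 + (j:ℤ)) = MX j := by
    unfold Msl MX; omega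
  push_cast at h ⊢
  rw [h]

lemma cardSwap12 (n a b₁ b₂ b₃ : ℤ) :
    (simpF n a b₁ b₂ b₃).card = (simpF n a b₂ b₁ b₃).card := by
  refine Finset.card_bij' (fun p _ => (p.2.1, p.1, p.2.2)) (fun p _ => (p.2.1, p.1, p.2.2)) ?_ ?_ ?_ ?_
  · intro p hp
    simp only [simpF, Finset.mem_filter, mem_box, sPred] at hp ⊢
    omega
  · intro p hp
    simp only [simpF, Finset.mem_filter, mem_box, sPred] at hp ⊢
    omega
  · intro p _; rfl
  · intro p _; rfl

lemma cardSwap13 (n a b₁ b₂ b₃ : ℤ) :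
    (simpF n a b₁ b₂ b₃).card = (simpF n a b₃ b₂ b₁).card := by
  refine Finset.card_bij' (fun p _ => (p.2.2, p.2.1, p.1)) (fun p _ => (p.2.2, p.2.1, p.1)) ?_ ?_ ?_ ?_
  · intro p hp
    simp only [simpF, Finset.mem_filter, mem_box, sPred] at hp ⊢
    omega
  · intro p hp
    simp only [simpF, Finset.mem_filter, mem_box, sPred] at hp ⊢
    omega
  · intro p _; rfl
  · intro p _; rfl

def pOct (n : ℤ) (p : ℤ × ℤ × ℤ) : Prop :=
  -3*n ≤ p.1 + p.2.1 + p.2.2 ∧ p.1 + p.2.1 + p.2.2 ≤ 3*n ∧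
  -9*n ≤ p.1 + p.2.1 + p.2.2 - 6*p.1 ∧ p.1 + p.2.1 + p.2.2 - 6*p.1 ≤ 9*n ∧
  -9*n ≤ p.1 + p.2.1 + p.2.2 - 6*p.2.1 ∧ p.1 + p.2.1 + p.2.2 - 6*p.2.1 ≤ 9*n ∧
  -9*n ≤ p.1 + p.2.1 + p.2.2 - 6*p.2.2 ∧ p.1 + p.2.1 + p.2.2 - 6*p.2.2 ≤ 9*n

instance (n : ℤ) : DecidablePred (pOct n) := by
  intro p; unfold pOct; infer_instance

noncomputable def octF (n : ℤ) : Finset (ℤ × ℤ × ℤ) := (box n).filter (pOct n)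

lemma partition :
    ((simpF (t:ℤ) (3*t) (9*t) (9*t) (9*t)).card : ℤ)
      = (octF (t:ℤ)).card + (simpF (t:ℤ) (-3*t-1) (9*t) (9*t) (9*t)).card
        + (simpF (t:ℤ) (3*t) (-9*t-1) (9*t) (9*t)).card
        + (simpF (t:ℤ) (3*t) (9*t) (-9*t-1) (9*t)).card
        + (simpF (t:ℤ) (3*t) (9*t) (9*t) (-9*t-1)).card := by
  have key : ∀ (S : Finset (ℤ×ℤ×ℤ)) (q : ℤ×ℤ×ℤ → Prop) [DecidablePred q],
      (S.card : ℤ) = ((S.filter q).card : ℤ) + ((S.filter (fun p => ¬ q p)).card : ℤ) := by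
    intro S q _
    rw [← Finset.card_filter_add_card_filter_not (p := q)]
    push_cast; ring
  set n : ℤ := (t : ℤ) with hn_def
  set P : ℤ×ℤ×ℤ → Prop := sPred (3*n) (9*n) (9*n) (9*n) with hP
  set T : Finset (ℤ×ℤ×ℤ) := (box n).filter P with hT
  set v0 : ℤ×ℤ×ℤ → Prop := fun p => p.1+p.2.1+p.2.2 ≤ -3*n-1 with hv0
  set vx : ℤ×ℤ×ℤ → Prop := fun p => p.1+p.2.1+p.2.2+9*n+1 ≤ 6*p.1 with hvx
  set vy : ℤ×ℤ×ℤ → Prop := fun p => p.1+p.2.1+p.2.2+9*n+1 ≤ 6*p.2.1 with hvy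
  set vz : ℤ×ℤ×ℤ → Prop := fun p => p.1+p.2.1+p.2.2+9*n+1 ≤ 6*p.2.2 with hvz
  have k0 := key T v0
  have k1 := key (T.filter (fun p => ¬ v0 p)) vx
  have k2 := key ((T.filter (fun p => ¬ v0 p)).filter (fun p => ¬ vx p)) vy
  have k3 := key (((T.filter (fun p => ¬ v0 p)).filter (fun p => ¬ vx p)).filter
    (fun p => ¬ vy p)) vz
  have E0 : T.filter v0 = simpF n (-3*n-1) (9*n) (9*n) (9*n) := by
    rw [hT, simpF, Finset.filter_filter]
    apply Finset.filter_congr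
    intro p _
    rw [hP, hv0]; unfold sPred; omega
  have E1 : (T.filter (fun p => ¬ v0 p)).filter vx
      = simpF n (3*n) (-9*n-1) (9*n) (9*n) := by
    rw [hT, simpF, Finset.filter_filter, Finset.filter_filter]
    apply Finset.filter_congr
    intro p _
    rw [hP, hv0, hvx]; unfold sPred
    have hn0 : 0 ≤ n := by rw [hn_def]; positivity
    omega
  have E2 : ((T.filter (fun p => ¬ v0 p)).filter (fun p => ¬ vx p)).filter vy
      = simpF n (3*n) (9*n) (-9*n-1) (9*n) := by
    rw [hT, simpF, Finset.filter_filter, Finset.filter_filter, Finset.filter_filter]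
    apply Finset.filter_congr
    intro p _
    rw [hP, hv0, hvx, hvy]; unfold sPred
    have hn0 : 0 ≤ n := by rw [hn_def]; positivity
    omega
  have E3 : (((T.filter (fun p => ¬ v0 p)).filter (fun p => ¬ vx p)).filter
      (fun p => ¬ vy p)).filter vz = simpF n (3*n) (9*n) (9*n) (-9*n-1) := by
    rw [hT, simpF, Finset.filter_filter, Finset.filter_filter, Finset.filter_filter,
      Finset.filter_filter]
    apply Finset.filter_congr
    intro p _
    rw [hP, hv0, hvx, hvy, hvz]; unfold sPred
    have hn0 : 0 ≤ n := by rw [hn_def]; positivity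
    omega
  have E4 : (((T.filter (fun p => ¬ v0 p)).filter (fun p => ¬ vx p)).filter
      (fun p => ¬ vy p)).filter (fun p => ¬ vz p) = octF n := by
    rw [hT, octF, Finset.filter_filter, Finset.filter_filter, Finset.filter_filter,
      Finset.filter_filter]
    apply Finset.filter_congr
    intro p _
    rw [hP, hv0, hvx, hvy, hvz]; unfold sPred pOct; omega
  rw [E0] at k0
  rw [E1] at k1
  rw [E2] at k2
  rw [E3, E4] at k3
  show (T.card : ℤ)
      = ((octF n).card : ℤ) + ((simpF n (-3*n-1) (9*n) (9*n) (9*n)).card : ℤ)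
        + ((simpF n (3*n) (-9*n-1) (9*n) (9*n)).card : ℤ)
        + ((simpF n (3*n) (9*n) (-9*n-1) (9*n)).card : ℤ)
        + ((simpF n (3*n) (9*n) (9*n) (-9*n-1)).card : ℤ)
  linarith [k0, k1, k2, k3]

lemma octF_card : ((octF (t:ℤ)).card : ℤ) = 36*(t:ℤ)^3+9*(t:ℤ)^2-(t:ℤ)+1 := by
  have hpart := partition t
  have hT := cardT t
  have hC0 := cardC0 t
  have hX := cardCX t
  have hY : (simpF (t:ℤ) (3*t) (9*t) (-9*(t:ℤ)-1) (9*t)).card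
      = (simpF (t:ℤ) (3*t) (-9*(t:ℤ)-1) (9*t) (9*t)).card :=
    (cardSwap12 (t:ℤ) (3*t) (-9*(t:ℤ)-1) (9*t) (9*t)).symm
  have hZ : (simpF (t:ℤ) (3*t) (9*t) (9*t) (-9*(t:ℤ)-1)).card
      = (simpF (t:ℤ) (3*t) (-9*(t:ℤ)-1) (9*t) (9*t)).card :=
    (cardSwap13 (t:ℤ) (3*t) (-9*(t:ℤ)-1) (9*t) (9*t)).symm
  have hY' : ((simpF (t:ℤ) (3*t) (9*t) (-9*(t:ℤ)-1) (9*t)).card : ℤ)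
      = ((simpF (t:ℤ) (3*t) (-9*(t:ℤ)-1) (9*t) (9*t)).card : ℤ) := congrArg _ hY
  have hZ' : ((simpF (t:ℤ) (3*t) (9*t) (9*t) (-9*(t:ℤ)-1)).card : ℤ)
      = ((simpF (t:ℤ) (3*t) (-9*(t:ℤ)-1) (9*t) (9*t)).card : ℤ) := congrArg _ hZ
  have h9 : (-9*(t:ℤ)-1) = ((-9*t-1 : ℤ)) := by ring
  linarith [hpart, hT, hC0, hX, hY', hZ']
end Inst

def Vset : Set (Fin 3 → ℝ) :=
  {![-1, 2, 2], ![1, -2, -2], ![2, -1, 2], ![-2, 1, -2], ![2, 2, -1], ![-2, -2, 1]}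

def Hq (q : Fin 3 → ℝ) : Prop :=
  -3 ≤ q 0 + q 1 + q 2 ∧ q 0 + q 1 + q 2 ≤ 3 ∧
  -9 ≤ q 0 + q 1 + q 2 - 6 * q 0 ∧ q 0 + q 1 + q 2 - 6 * q 0 ≤ 9 ∧
  -9 ≤ q 0 + q 1 + q 2 - 6 * q 1 ∧ q 0 + q 1 + q 2 - 6 * q 1 ≤ 9 ∧
  -9 ≤ q 0 + q 1 + q 2 - 6 * q 2 ∧ q 0 + q 1 + q 2 - 6 * q 2 ≤ 9

lemma combo_le {A B c a b : ℝ} (hA : A ≤ c) (hB : B ≤ c) (ha : 0 ≤ a) (hb : 0 ≤ b)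
    (hab : a + b = 1) : a * A + b * B ≤ c := by
  have habc : a * c + b * c = c := by rw [← add_mul, hab, one_mul]
  nlinarith [mul_le_mul_of_nonneg_left hA ha, mul_le_mul_of_nonneg_left hB hb]

lemma combo_ge {A B c a b : ℝ} (hA : c ≤ A) (hB : c ≤ B) (ha : 0 ≤ a) (hb : 0 ≤ b)
    (hab : a + b = 1) : c ≤ a * A + b * B := by
  have habc : a * c + b * c = c := by rw [← add_mul, hab, one_mul]
  nlinarith [mul_le_mul_of_nonneg_left hA ha, mul_le_mul_of_nonneg_left hB hb]

lemma hull_subset_H : convexHull ℝ Vset ⊆ {q | Hq q} := by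
  apply convexHull_min
  · intro q hq
    simp only [Vset, Set.mem_insert_iff, Set.mem_singleton_iff] at hq
    rcases hq with rfl | rfl | rfl | rfl | rfl | rfl <;>
      (show Hq _
       unfold Hq
       norm_num [Matrix.cons_val_zero, Matrix.cons_val_one, Matrix.head_cons, Matrix.cons_val_two, Matrix.tail_cons])
  · intro x hx y hy a b ha hb hab
    simp only [Set.mem_setOf_eq] at hx hy
    obtain ⟨x1, x2, x3, x4, x5, x6, x7, x8⟩ := hx
    obtain ⟨y1, y2, y3, y4, y5, y6, y7, y8⟩ := hy
    simp only [Set.mem_setOf_eq, Hq, Pi.add_apply, Pi.smul_apply, smul_eq_mul]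
    refine ⟨?_, ?_, ?_, ?_, ?_, ?_, ?_, ?_⟩
    · linarith [combo_ge x1 y1 ha hb hab]
    · linarith [combo_le x2 y2 ha hb hab]
    · linarith [combo_ge x3 y3 ha hb hab]
    · linarith [combo_le x4 y4 ha hb hab]
    · linarith [combo_ge x5 y5 ha hb hab]
    · linarith [combo_le x6 y6 ha hb hab]
    · linarith [combo_ge x7 y7 ha hb hab]
    · linarith [combo_le x8 y8 ha hb hab]

lemma H_subset_hull (q : Fin 3 → ℝ) (hq : Hq q) : q ∈ convexHull ℝ Vset := by
  obtain ⟨h1, h2, h3, h4, h5, h6, h7, h8⟩ := hq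
  set s : ℝ := q 0 + q 1 + q 2 with hs
  set y1 : ℝ := (2*s - 3*q 0)/9 with hy1
  set y2 : ℝ := (2*s - 3*q 1)/9 with hy2
  set y3 : ℝ := (2*s - 3*q 2)/9 with hy3
  have habs : |y1| + |y2| + |y3| ≤ 1 := by
    rcases abs_cases y1 with ⟨e1, _⟩ | ⟨e1, _⟩ <;>
    rcases abs_cases y2 with ⟨e2, _⟩ | ⟨e2, _⟩ <;>
    rcases abs_cases y3 with ⟨e3, _⟩ | ⟨e3, _⟩ <;>
      (rw [e1, e2, e3, hy1, hy2, hy3]; rw [hs]; linarith)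
  set c4 : ℝ := (1 - (|y1| + |y2| + |y3|))/2 with hc4
  have hc4nn : 0 ≤ c4 := by rw [hc4]; linarith
  set v1 : Fin 3 → ℝ := ![-1, 2, 2] with hv1
  set w1 : Fin 3 → ℝ := ![1, -2, -2] with hw1
  set v2 : Fin 3 → ℝ := ![2, -1, 2] with hv2
  set w2 : Fin 3 → ℝ := ![-2, 1, -2] with hw2
  set v3 : Fin 3 → ℝ := ![2, 2, -1] with hv3
  set w3 : Fin 3 → ℝ := ![-2, -2, 1] with hw3
  have hw1v : w1 = -v1 := by
    rw [hv1, hw1]; funext i; fin_cases i <;> simp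
  have hw2v : w2 = -v2 := by
    rw [hv2, hw2]; funext i; fin_cases i <;> simp
  have hw3v : w3 = -v3 := by
    rw [hv3, hw3]; funext i; fin_cases i <;> simp
  set u1 : Fin 3 → ℝ := if 0 ≤ y1 then v1 else w1 with hu1
  set u2 : Fin 3 → ℝ := if 0 ≤ y2 then v2 else w2 with hu2
  set u3 : Fin 3 → ℝ := if 0 ≤ y3 then v3 else w3 with hu3
  have hkey1 : |y1| • u1 = y1 • v1 := by
    rw [hu1]; split_ifs with h
    · rw [abs_of_nonneg h]
    · rw [abs_of_neg (not_le.mp h), hw1v, smul_neg, neg_smul, neg_neg]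
  have hkey2 : |y2| • u2 = y2 • v2 := by
    rw [hu2]; split_ifs with h
    · rw [abs_of_nonneg h]
    · rw [abs_of_neg (not_le.mp h), hw2v, smul_neg, neg_smul, neg_neg]
  have hkey3 : |y3| • u3 = y3 • v3 := by
    rw [hu3]; split_ifs with h
    · rw [abs_of_nonneg h]
    · rw [abs_of_neg (not_le.mp h), hw3v, smul_neg, neg_smul, neg_neg]
  have hmem : ∀ i : Fin 5, (![u1, u2, u3, v1, w1] : Fin 5 → (Fin 3 → ℝ)) i ∈ Vset := by
    intro i
    have hv1m : v1 ∈ Vset := by rw [Vset, hv1]; left; rfl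
    have hw1m : w1 ∈ Vset := by rw [Vset, hw1]; right; left; rfl
    have hv2m : v2 ∈ Vset := by rw [Vset, hv2]; right; right; left; rfl
    have hw2m : w2 ∈ Vset := by rw [Vset, hw2]; right; right; right; left; rfl
    have hv3m : v3 ∈ Vset := by rw [Vset, hv3]; right; right; right; right; left; rfl
    have hw3m : w3 ∈ Vset := by rw [Vset, hw3]; right; right; right; right; right; rfl
    fin_cases i <;> simp only [Matrix.cons_val_zero, Matrix.cons_val_one, Matrix.head_cons,
      Matrix.cons_val_two, Matrix.cons_val_three, Matrix.cons_val_four, Matrix.tail_cons]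
    · rw [hu1]; split_ifs <;> assumption
    · rw [hu2]; split_ifs <;> assumption
    · rw [hu3]; split_ifs <;> assumption
    · exact hv1m
    · exact hw1m
  have hrepr : q = ∑ i : Fin 5,
      (![|y1|, |y2|, |y3|, c4, c4] : Fin 5 → ℝ) i • (![u1, u2, u3, v1, w1] : Fin 5 → (Fin 3 → ℝ)) i := by
    rw [Fin.sum_univ_five]
    simp only [Matrix.cons_val_zero, Matrix.cons_val_one, Matrix.head_cons,
      Matrix.cons_val_two, Matrix.cons_val_three, Matrix.cons_val_four, Matrix.tail_cons]
    rw [hkey1, hkey2, hkey3, hw1v, smul_neg]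
    have : y1 • v1 + y2 • v2 + y3 • v3 + c4 • v1 + -(c4 • v1) = y1 • v1 + y2 • v2 + y3 • v3 := by
      abel
    rw [this]
    funext i
    fin_cases i <;>
      (simp [Pi.add_apply, Pi.smul_apply, hv1, hv2, hv3, smul_eq_mul,
        Matrix.cons_val_zero, Matrix.cons_val_one, Matrix.head_cons,
        Matrix.cons_val_two, Matrix.tail_cons, hy1, hy2, hy3, hs]
       ring)
  rw [hrepr]
  apply (convex_convexHull ℝ Vset).sum_mem
  · intro i _
    fin_cases i <;> simp only [Matrix.cons_val_zero, Matrix.cons_val_one, Matrix.head_cons,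
      Matrix.cons_val_two, Matrix.cons_val_three, Matrix.cons_val_four, Matrix.tail_cons]
    · exact abs_nonneg y1
    · exact abs_nonneg y2
    · exact abs_nonneg y3
    · exact hc4nn
    · exact hc4nn
  · rw [Fin.sum_univ_five]
    simp only [Matrix.cons_val_zero, Matrix.cons_val_one, Matrix.head_cons,
      Matrix.cons_val_two, Matrix.cons_val_three, Matrix.cons_val_four, Matrix.tail_cons]
    rw [hc4]
    ring
  · intro i _
    exact subset_convexHull ℝ Vset (hmem i)

lemma smul_hull_char (c : ℝ) (hc : 0 < c) (q : Fin 3 → ℝ) :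
    q ∈ c • convexHull ℝ Vset ↔
      (-3*c ≤ q 0 + q 1 + q 2 ∧ q 0 + q 1 + q 2 ≤ 3*c ∧
       -9*c ≤ q 0 + q 1 + q 2 - 6 * q 0 ∧ q 0 + q 1 + q 2 - 6 * q 0 ≤ 9*c ∧
       -9*c ≤ q 0 + q 1 + q 2 - 6 * q 1 ∧ q 0 + q 1 + q 2 - 6 * q 1 ≤ 9*c ∧
       -9*c ≤ q 0 + q 1 + q 2 - 6 * q 2 ∧ q 0 + q 1 + q 2 - 6 * q 2 ≤ 9*c) := by
  constructor
  · rintro ⟨u, hu, rfl⟩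
    obtain ⟨h1, h2, h3, h4, h5, h6, h7, h8⟩ := hull_subset_H hu
    simp only [Pi.smul_apply, smul_eq_mul]
    refine ⟨?_, ?_, ?_, ?_, ?_, ?_, ?_, ?_⟩ <;>
      nlinarith [mul_le_mul_of_nonneg_left h1 hc.le, mul_le_mul_of_nonneg_left h2 hc.le,
        mul_le_mul_of_nonneg_left h3 hc.le, mul_le_mul_of_nonneg_left h4 hc.le,
        mul_le_mul_of_nonneg_left h5 hc.le, mul_le_mul_of_nonneg_left h6 hc.le,
        mul_le_mul_of_nonneg_left h7 hc.le, mul_le_mul_of_nonneg_left h8 hc.le]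
  · rintro ⟨h1, h2, h3, h4, h5, h6, h7, h8⟩
    refine ⟨fun i => q i / c, H_subset_hull _ ?_, ?_⟩
    · unfold Hq
      refine ⟨?_, ?_, ?_, ?_, ?_, ?_, ?_, ?_⟩
      · rw [show q 0 / c + q 1 / c + q 2 / c = (q 0 + q 1 + q 2)/c by ring, le_div_iff₀ hc]
        linarith
      · rw [show q 0 / c + q 1 / c + q 2 / c = (q 0 + q 1 + q 2)/c by ring, div_le_iff₀ hc]
        linarith
      · rw [show q 0 / c + q 1 / c + q 2 / c - 6 * (q 0 / c)
          = (q 0 + q 1 + q 2 - 6 * q 0)/c by ring, le_div_iff₀ hc]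
        linarith
      · rw [show q 0 / c + q 1 / c + q 2 / c - 6 * (q 0 / c)
          = (q 0 + q 1 + q 2 - 6 * q 0)/c by ring, div_le_iff₀ hc]
        linarith
      · rw [show q 0 / c + q 1 / c + q 2 / c - 6 * (q 1 / c)
          = (q 0 + q 1 + q 2 - 6 * q 1)/c by ring, le_div_iff₀ hc]
        linarith
      · rw [show q 0 / c + q 1 / c + q 2 / c - 6 * (q 1 / c)
          = (q 0 + q 1 + q 2 - 6 * q 1)/c by ring, div_le_iff₀ hc]
        linarith
      · rw [show q 0 / c + q 1 / c + q 2 / c - 6 * (q 2 / c)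
          = (q 0 + q 1 + q 2 - 6 * q 2)/c by ring, le_div_iff₀ hc]
        linarith
      · rw [show q 0 / c + q 1 / c + q 2 / c - 6 * (q 2 / c)
          = (q 0 + q 1 + q 2 - 6 * q 2)/c by ring, div_le_iff₀ hc]
        linarith
    · funext i
      simp only [Pi.smul_apply, smul_eq_mul]
      field_simp

lemma pOct_box {n : ℤ} {p : ℤ × ℤ × ℤ} (h : pOct n p) : p ∈ box n := by
  rw [mem_box]; unfold pOct at h; omega

lemma mem_octF {n : ℤ} {p : ℤ × ℤ × ℤ} : p ∈ octF n ↔ pOct n p := by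
  rw [octF, Finset.mem_filter]
  exact ⟨fun h => h.2, fun h => ⟨pOct_box h, h⟩⟩

lemma mem_iff_pOct (t : ℕ) (ht : 0 < t) (p : Fin 3 → ℤ) :
    ((fun i => (p i : ℝ)) ∈ (t : ℝ) • convexHull ℝ Vset) ↔ pOct (t:ℤ) (p 0, p 1, p 2) := by
  have hc : (0:ℝ) < (t:ℝ) := by exact_mod_cast ht
  rw [smul_hull_char _ hc]
  unfold pOct
  constructor
  · rintro ⟨h1, h2, h3, h4, h5, h6, h7, h8⟩
    refine ⟨by exact_mod_cast h1, by exact_mod_cast h2, by exact_mod_cast h3,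
      by exact_mod_cast h4, by exact_mod_cast h5, by exact_mod_cast h6,
      by exact_mod_cast h7, by exact_mod_cast h8⟩
  · rintro ⟨h1, h2, h3, h4, h5, h6, h7, h8⟩
    refine ⟨by exact_mod_cast h1, by exact_mod_cast h2, by exact_mod_cast h3,
      by exact_mod_cast h4, by exact_mod_cast h5, by exact_mod_cast h6,
      by exact_mod_cast h7, by exact_mod_cast h8⟩

end Aux

open Pointwise

lemma hullCount_eq (t : ℕ) (ht : 0 < t) : hullCount Vset t = (octF (t:ℤ)).card := by
  rw [hullCount]
  set e : (Fin 3 → ℤ) → ℤ × ℤ × ℤ := fun p => (p 0, p 1, p 2) with he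
  set S : Set (Fin 3 → ℤ) :=
    {p : Fin 3 → ℤ | (fun i => (p i : ℝ)) ∈ (t : ℝ) • convexHull ℝ Vset} with hS
  have hinj : Function.Injective e := by
    intro p q h
    rw [he] at h
    simp only [Prod.mk.injEq] at h
    funext i
    fin_cases i
    · exact h.1
    · exact h.2.1
    · exact h.2.2
  have himg : e '' S = ↑(octF (t:ℤ)) := by
    ext x
    constructor
    · rintro ⟨p, hp, rfl⟩
      rw [Finset.mem_coe, mem_octF]
      exact (mem_iff_pOct t ht p).1 hp
    · intro hx
      rw [Finset.mem_coe, mem_octF] at hx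
      refine ⟨![x.1, x.2.1, x.2.2], ?_, ?_⟩
      · rw [hS, Set.mem_setOf_eq, mem_iff_pOct t ht]
        simpa using hx
      · rw [he]
        simp
  calc S.ncard = (e '' S).ncard := (Set.ncard_image_of_injective S hinj).symm
    _ = (octF (t:ℤ)).card := by rw [himg, Set.ncard_coe_finset]

theorem octahedron_O3_ehrhart :
    ∀ t : ℕ, 0 < t →
      (hullCount {![-1, 2, 2], ![1, -2, -2], ![2, -1, 2], ![-2, 1, -2], ![2, 2, -1],
          ![-2, -2, 1]} t : ℚ) =
        36 * (t : ℚ) ^ 3 + 9 * t ^ 2 - t + 1 := by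
  intro t ht
  have h1 : hullCount Vset t = (octF (t:ℤ)).card := hullCount_eq t ht
  have h2 := octF_card t
  show (hullCount Vset t : ℚ) = _
  rw [h1]
  have h3 : (((octF (t:ℤ)).card : ℤ) : ℚ) = ((36*(t:ℤ)^3+9*(t:ℤ)^2-(t:ℤ)+1 : ℤ) : ℚ) :=
    congrArg _ h2
  push_cast at h3
  rw [h3]
end
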